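/- arXiv:2501.15301 — 6 statements merged into one kernel-verified Lean document; each statement's English description precedes it below -/
import Mathlib

section
/- Assume the modal decomposition hypothesis holds for p with functions f_i, g_i and coefficients σ_i (0 ≤ i ≤ K). Let f : 𝒳 → ℝ and g : 𝒴 → ℝ be written as f(x) = ∑_{i=0}^K α_i·f_i(x) + r_f(x) and g(y) = ∑_{i=0}^K β_i·g_i(y) + r_g(y), where ∑_x pX(x)·r_f(x)·f_i(x) = 0 and ∑_y pY(y)·r_g(y)·g_i(y) = 0 for every 0 ≤ i ≤ K. Then ∑_{x,y} p(x,y)·(f(x) − g(y))² = ∑_{i=0}^K (α_i² − 2σ_i·α_i·β_i + β_i²) + ∑_x pX(x)·r_f(x)² + ∑_y pY(y)·r_g(y)². -/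
open Finset

noncomputable section
open scoped Classical

variable {𝒳 𝒴 𝒮 𝒯 : Type*}

/-- Marginal of a joint pmf on the first coordinate. -/
def margX [Fintype 𝒴] (p : 𝒳 × 𝒴 → ℝ) (x : 𝒳) : ℝ := ∑ y, p (x, y)

/-- Marginal of a joint pmf on the second coordinate. -/
def margY [Fintype 𝒳] (p : 𝒳 × 𝒴 → ℝ) (y : 𝒴) : ℝ := ∑ x, p (x, y)

/-- Distribution of `S = s(X)`. -/
def margS [Fintype 𝒳] [Fintype 𝒴] (p : 𝒳 × 𝒴 → ℝ) (s : 𝒳 → 𝒮) (s0 : 𝒮) : ℝ :=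
  ∑ x ∈ Finset.univ.filter (fun x => s x = s0), margX p x

/-- Distribution of `T = t(Y)`. -/
def margT [Fintype 𝒳] [Fintype 𝒴] (p : 𝒳 × 𝒴 → ℝ) (t : 𝒴 → 𝒯) (t0 : 𝒯) : ℝ :=
  ∑ y ∈ Finset.univ.filter (fun y => t y = t0), margY p y

/-- Joint distribution of `(S, T) = (s(X), t(Y))`. -/
def margST [Fintype 𝒳] [Fintype 𝒴] (p : 𝒳 × 𝒴 → ℝ) (s : 𝒳 → 𝒮) (t : 𝒴 → 𝒯)
    (w : 𝒮 × 𝒯) : ℝ :=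
  ∑ x ∈ Finset.univ.filter (fun x => s x = w.1),
    ∑ y ∈ Finset.univ.filter (fun y => t y = w.2), p (x, y)

/-- `q` is a probability mass function. -/
def IsPMF {Z : Type*} [Fintype Z] (q : Z → ℝ) : Prop := (∀ z, 0 ≤ q z) ∧ ∑ z, q z = 1

/-- `s` is a sufficient statistic of `X` for `Y` (Markov chain `X - S - Y`). -/
def SuffS [Fintype 𝒴] (p : 𝒳 × 𝒴 → ℝ) (s : 𝒳 → 𝒮) : Prop :=
  ∀ x x' y, s x = s x' → p (x, y) * margX p x' = p (x', y) * margX p x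

/-- `t` is a sufficient statistic of `Y` for `X` (Markov chain `X - T - Y`). -/
def SuffT [Fintype 𝒳] (p : 𝒳 × 𝒴 → ℝ) (t : 𝒴 → 𝒯) : Prop :=
  ∀ x y y', t y = t y' → p (x, y) * margY p y' = p (x, y') * margY p y

/-- Mutual information of a joint pmf on `A × B`. -/
def mutInfo {A B : Type*} [Fintype A] [Fintype B] (q : A × B → ℝ) : ℝ :=
  ∑ z : A × B, if 0 < q z then
    q z * Real.log (q z / ((∑ b, q (z.1, b)) * (∑ a, q (a, z.2)))) else 0

/-- Shannon entropy of a pmf on a finite type. -/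
def entropy {W : Type*} [Fintype W] (r : W → ℝ) : ℝ :=
  -∑ w, if 0 < r w then r w * Real.log (r w) else 0

/-- Wyner's common information of a joint pmf `m` on `A × B`. -/
def wynerCI {A B : Type*} [Fintype A] [Fintype B] (m : A × B → ℝ) : ℝ :=
  sInf { c | ∃ (n : ℕ) (q : A × B × Fin n → ℝ),
    IsPMF q ∧
    (∀ a b, ∑ w, q (a, b, w) = m (a, b)) ∧
    (∀ a b w, q (a, b, w) * (∑ a', ∑ b', q (a', b', w)) =
      (∑ b', q (a, b', w)) * (∑ a', q (a', b, w))) ∧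
    c = mutInfo (fun z : Fin n × (A × B) => q (z.2.1, z.2.2, z.1)) }

/-- Gács–Körner common information of a joint pmf `m` on `A × B`. -/
def gkCI {A B : Type*} [Fintype A] [Fintype B] (m : A × B → ℝ) : ℝ :=
  sSup { c | ∃ (n : ℕ) (f : A → Fin n) (g : B → Fin n),
    (∑ z : A × B, if f z.1 ≠ g z.2 then m z else 0) = 0 ∧
    c = entropy (fun w : Fin n =>
      ∑ a ∈ Finset.univ.filter (fun a => f a = w), ∑ b, m (a, b)) }

/-- Information-bottleneck Lagrangian value. -/
def ibL {A B : Type*} [Fintype A] [Fintype B] (m : A × B → ℝ) (β : ℝ) : ℝ :=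
  sInf { c | ∃ (n : ℕ) (r : A → Fin n → ℝ),
    (∀ a u, 0 ≤ r a u) ∧ (∀ a, ∑ u, r a u = 1) ∧
    c = mutInfo (fun z : Fin n × A => r z.2 z.1 * ∑ b, m (z.2, b))
        - β * mutInfo (fun z : Fin n × B => ∑ a, r a z.1 * m (a, z.2)) }

/-- Information-bottleneck curve. -/
def ibCurve {A B : Type*} [Fintype A] [Fintype B] (m : A × B → ℝ) (R : ℝ) : ℝ :=
  sSup { c | ∃ (n : ℕ) (r : A → Fin n → ℝ),
    (∀ a u, 0 ≤ r a u) ∧ (∀ a, ∑ u, r a u = 1) ∧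
    mutInfo (fun z : Fin n × A => r z.2 z.1 * ∑ b, m (z.2, b)) ≤ R ∧
    c = mutInfo (fun z : Fin n × B => ∑ a, r a z.1 * m (a, z.2)) }


/-- Expansion of `E[(f(X) - g(Y))²]` via the modal decomposition. -/
theorem modal_expansion
    [Fintype 𝒳] [Nonempty 𝒳] [Fintype 𝒴] [Nonempty 𝒴]
    (p : 𝒳 × 𝒴 → ℝ) (hp : IsPMF p)
    (hX : ∀ x, 0 < margX p x) (hY : ∀ y, 0 < margY p y)
    (K : ℕ) (σ : Fin (K + 1) → ℝ)
    (f : Fin (K + 1) → 𝒳 → ℝ) (g : Fin (K + 1) → 𝒴 → ℝ)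
    (hσ0 : σ 0 = 1) (hσpos : ∀ i, 0 < σ i)
    (hf0 : ∀ x, f 0 x = 1) (hg0 : ∀ y, g 0 y = 1)
    (horthf : ∀ i j, (∑ x, margX p x * f i x * f j x) = if i = j then 1 else 0)
    (horthg : ∀ i j, (∑ y, margY p y * g i y * g j y) = if i = j then 1 else 0)
    (hdecomp : ∀ x y, p (x, y) = margX p x * margY p y * ∑ i, σ i * f i x * g i y)
    (F : 𝒳 → ℝ) (G : 𝒴 → ℝ) (α β : Fin (K + 1) → ℝ) (rf : 𝒳 → ℝ) (rg : 𝒴 → ℝ)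
    (hF : ∀ x, F x = (∑ i, α i * f i x) + rf x)
    (hG : ∀ y, G y = (∑ i, β i * g i y) + rg y)
    (hrf : ∀ i, (∑ x, margX p x * rf x * f i x) = 0)
    (hrg : ∀ i, (∑ y, margY p y * rg y * g i y) = 0) :
    (∑ z : 𝒳 × 𝒴, p z * (F z.1 - G z.2) ^ 2)
      = (∑ i, (α i ^ 2 - 2 * σ i * α i * β i + β i ^ 2))
        + (∑ x, margX p x * rf x ^ 2) + (∑ y, margY p y * rg y ^ 2) := by
  classical
  -- coefficient extraction for F
  have hFcoef : ∀ j, (∑ x, margX p x * F x * f j x) = α j := by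
    intro j
    have hx : ∀ x, margX p x * F x * f j x
        = (∑ i, α i * (margX p x * f i x * f j x)) + margX p x * rf x * f j x := by
      intro x
      rw [hF, mul_add, add_mul, Finset.mul_sum, Finset.sum_mul]
      congr 1
      exact Finset.sum_congr rfl fun i _ => by ring
    simp only [hx, Finset.sum_add_distrib]
    rw [hrf j, add_zero, Finset.sum_comm]
    have h2 : ∀ i ∈ Finset.univ, (∑ x, α i * (margX p x * f i x * f j x))
        = α i * (if i = j then 1 else 0) := fun i _ => by
      rw [← Finset.mul_sum, horthf i j]
    rw [Finset.sum_congr rfl h2]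
    simp
  have hGcoef : ∀ j, (∑ y, margY p y * G y * g j y) = β j := by
    intro j
    have hy : ∀ y, margY p y * G y * g j y
        = (∑ i, β i * (margY p y * g i y * g j y)) + margY p y * rg y * g j y := by
      intro y
      rw [hG, mul_add, add_mul, Finset.mul_sum, Finset.sum_mul]
      congr 1
      exact Finset.sum_congr rfl fun i _ => by ring
    simp only [hy, Finset.sum_add_distrib]
    rw [hrg j, add_zero, Finset.sum_comm]
    have h2 : ∀ i ∈ Finset.univ, (∑ y, β i * (margY p y * g i y * g j y))
        = β i * (if i = j then 1 else 0) := fun i _ => by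
      rw [← Finset.mul_sum, horthg i j]
    rw [Finset.sum_congr rfl h2]
    simp
  -- second moment of F
  have hFrf : (∑ x, margX p x * F x * rf x) = ∑ x, margX p x * rf x ^ 2 := by
    have hx : ∀ x, margX p x * F x * rf x
        = (∑ i, α i * (margX p x * rf x * f i x)) + margX p x * rf x ^ 2 := by
      intro x
      rw [hF, mul_add, add_mul, Finset.mul_sum, Finset.sum_mul]
      congr 1
      · exact Finset.sum_congr rfl fun i _ => by ring
      · ring
    simp only [hx, Finset.sum_add_distrib]
    rw [Finset.sum_comm]
    have h2 : ∀ i ∈ Finset.univ, (∑ x, α i * (margX p x * rf x * f i x)) = 0 :=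
      fun i _ => by rw [← Finset.mul_sum, hrf i, mul_zero]
    rw [Finset.sum_congr rfl h2]
    simp
  have hFsq : (∑ x, margX p x * F x ^ 2)
      = (∑ i, α i ^ 2) + ∑ x, margX p x * rf x ^ 2 := by
    have hx : ∀ x, margX p x * F x ^ 2
        = (∑ i, α i * (margX p x * F x * f i x)) + margX p x * F x * rf x := by
      intro x
      have h1 : margX p x * F x ^ 2
          = margX p x * F x * ((∑ i, α i * f i x) + rf x) := by
        rw [← hF]; ring
      rw [h1, mul_add, Finset.mul_sum]
      congr 1
      exact Finset.sum_congr rfl fun i _ => by ring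
    simp only [hx, Finset.sum_add_distrib, hFrf]
    rw [Finset.sum_comm]
    congr 1
    refine Finset.sum_congr rfl fun i _ => ?_
    rw [← Finset.mul_sum, hFcoef i]; ring
  have hGrg : (∑ y, margY p y * G y * rg y) = ∑ y, margY p y * rg y ^ 2 := by
    have hy : ∀ y, margY p y * G y * rg y
        = (∑ i, β i * (margY p y * rg y * g i y)) + margY p y * rg y ^ 2 := by
      intro y
      rw [hG, mul_add, add_mul, Finset.mul_sum, Finset.sum_mul]
      congr 1
      · exact Finset.sum_congr rfl fun i _ => by ring
      · ring
    simp only [hy, Finset.sum_add_distrib]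
    rw [Finset.sum_comm]
    have h2 : ∀ i ∈ Finset.univ, (∑ y, β i * (margY p y * rg y * g i y)) = 0 :=
      fun i _ => by rw [← Finset.mul_sum, hrg i, mul_zero]
    rw [Finset.sum_congr rfl h2]
    simp
  have hGsq : (∑ y, margY p y * G y ^ 2)
      = (∑ i, β i ^ 2) + ∑ y, margY p y * rg y ^ 2 := by
    have hy : ∀ y, margY p y * G y ^ 2
        = (∑ i, β i * (margY p y * G y * g i y)) + margY p y * G y * rg y := by
      intro y
      have h1 : margY p y * G y ^ 2
          = margY p y * G y * ((∑ i, β i * g i y) + rg y) := by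
        rw [← hG]; ring
      rw [h1, mul_add, Finset.mul_sum]
      congr 1
      exact Finset.sum_congr rfl fun i _ => by ring
    simp only [hy, Finset.sum_add_distrib, hGrg]
    rw [Finset.sum_comm]
    congr 1
    refine Finset.sum_congr rfl fun i _ => ?_
    rw [← Finset.mul_sum, hGcoef i]; ring
  -- cross term
  have hcross : (∑ z : 𝒳 × 𝒴, p z * (F z.1 * G z.2)) = ∑ i, σ i * α i * β i := by
    rw [Fintype.sum_prod_type]
    have hx : ∀ x y, p (x, y) * (F x * G y)
        = ∑ i, σ i * (margX p x * F x * f i x) * (margY p y * G y * g i y) := by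
      intro x y
      rw [hdecomp x y, Finset.mul_sum, Finset.sum_mul]
      exact Finset.sum_congr rfl fun i _ => by ring
    simp only [hx]
    have step : ∀ x, (∑ y, ∑ i, σ i * (margX p x * F x * f i x)
          * (margY p y * G y * g i y))
        = ∑ i, σ i * (margX p x * F x * f i x)
          * (∑ y, margY p y * G y * g i y) := by
      intro x
      rw [Finset.sum_comm]
      exact Finset.sum_congr rfl fun i _ => by rw [← Finset.mul_sum]
    simp only [step]
    rw [Finset.sum_comm]
    refine Finset.sum_congr rfl fun i _ => ?_
    rw [hGcoef i]
    have : (∑ x, σ i * (margX p x * F x * f i x) * β i)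
        = σ i * (∑ x, margX p x * F x * f i x) * β i := by
      rw [Finset.mul_sum, Finset.sum_mul]
    rw [this, hFcoef i]
  -- marginal reductions
  have hsum1 : (∑ z : 𝒳 × 𝒴, p z * F z.1 ^ 2) = ∑ x, margX p x * F x ^ 2 := by
    rw [Fintype.sum_prod_type]
    exact Finset.sum_congr rfl fun x _ => by
      simp only [margX, Finset.sum_mul]
  have hsum2 : (∑ z : 𝒳 × 𝒴, p z * G z.2 ^ 2) = ∑ y, margY p y * G y ^ 2 := by
    rw [Fintype.sum_prod_type_right]
    exact Finset.sum_congr rfl fun y _ => by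
      simp only [margY, Finset.sum_mul]
  -- assemble
  have expand : (∑ z : 𝒳 × 𝒴, p z * (F z.1 - G z.2) ^ 2)
      = (∑ z : 𝒳 × 𝒴, p z * F z.1 ^ 2)
        - 2 * (∑ z : 𝒳 × 𝒴, p z * (F z.1 * G z.2))
        + ∑ z : 𝒳 × 𝒴, p z * G z.2 ^ 2 := by
    rw [Finset.mul_sum, ← Finset.sum_sub_distrib, ← Finset.sum_add_distrib]
    exact Finset.sum_congr rfl fun z _ => by ring
  have e1 : (∑ i, (α i ^ 2 - 2 * σ i * α i * β i + β i ^ 2))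
      = (∑ i, α i ^ 2) - 2 * (∑ i, σ i * α i * β i) + ∑ i, β i ^ 2 := by
    rw [Finset.sum_add_distrib, Finset.sum_sub_distrib, Finset.mul_sum]
    congr 2
    exact Finset.sum_congr rfl fun i _ => by ring
  rw [expand, hsum1, hsum2, hcross, hFsq, hGsq, e1]
  ring


end
end

section
/- Assume the modal decomposition hypothesis holds for p, with additionally σ_1 ≥ σ_2 ≥ … ≥ σ_K and σ_i ≤ 1 for all i; let k = max{0 ≤ i ≤ K : σ_i = 1}. Let f : 𝒳 → ℝ and g : 𝒴 → ℝ satisfy ∑_{(x,y) : f(x) ≠ g(y)} p(x,y) = 0, and write f = ∑_{i=0}^K α_i·f_i + r_f, g = ∑_{i=0}^K β_i·g_i + r_g with ∑_x pX(x)·r_f(x)·f_i(x) = 0 and ∑_y pY(y)·r_g(y)·g_i(y) = 0 for all i. Then α_i = β_i for all 0 ≤ i ≤ k; α_i = β_i = 0 for all k < i ≤ K; and r_f(x) = 0 for all x ∈ 𝒳 and r_g(y) = 0 for all y ∈ 𝒴. -/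
open Finset

noncomputable section
open scoped Classical

variable {𝒳 𝒴 𝒮 𝒯 : Type*}

private lemma expand_sum {Z : Type*} [Fintype Z] {n : ℕ}
    (w : Z → ℝ) (e : Fin n → Z → ℝ) (c : Fin n → ℝ) (r FF : Z → ℝ)
    (hF : ∀ z, FF z = (∑ i, c i * e i z) + r z) (H : Z → ℝ) :
    (∑ z, w z * H z * FF z)
      = (∑ j, c j * (∑ z, w z * H z * e j z)) + ∑ z, w z * H z * r z := by
  have step : ∀ z ∈ Finset.univ, w z * H z * FF z
      = (∑ j, c j * (w z * H z * e j z)) + w z * H z * r z := by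
    intro z _
    rw [hF z, mul_add, Finset.mul_sum]
    congr 1
    exact Finset.sum_congr rfl fun j _ => by ring
  rw [Finset.sum_congr rfl step, Finset.sum_add_distrib, Finset.sum_comm]
  congr 1
  exact Finset.sum_congr rfl fun j _ => by rw [Finset.mul_sum]

private lemma proj_sum {Z : Type*} [Fintype Z] {n : ℕ}
    (w : Z → ℝ) (e : Fin n → Z → ℝ) (c : Fin n → ℝ) (r FF : Z → ℝ)
    (horth : ∀ i j, (∑ z, w z * e i z * e j z) = if i = j then 1 else 0)
    (hr : ∀ i, (∑ z, w z * r z * e i z) = 0)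
    (hF : ∀ z, FF z = (∑ i, c i * e i z) + r z) (i : Fin n) :
    (∑ z, w z * FF z * e i z) = c i := by
  have h1 : (∑ z, w z * FF z * e i z) = ∑ z, w z * e i z * FF z :=
    Finset.sum_congr rfl fun z _ => by ring
  rw [h1, expand_sum w e c r FF hF (e i)]
  have h2 : (∑ z, w z * e i z * r z) = 0 := by
    rw [← hr i]
    exact Finset.sum_congr rfl fun z _ => by ring
  rw [h2, add_zero]
  simp only [horth]
  simp

private lemma norm_sum {Z : Type*} [Fintype Z] {n : ℕ}
    (w : Z → ℝ) (e : Fin n → Z → ℝ) (c : Fin n → ℝ) (r FF : Z → ℝ)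
    (horth : ∀ i j, (∑ z, w z * e i z * e j z) = if i = j then 1 else 0)
    (hr : ∀ i, (∑ z, w z * r z * e i z) = 0)
    (hF : ∀ z, FF z = (∑ i, c i * e i z) + r z) :
    (∑ z, w z * FF z * FF z) = (∑ i, c i * c i) + ∑ z, w z * r z * r z := by
  rw [expand_sum w e c r FF hF FF]
  congr 1
  · exact Finset.sum_congr rfl fun j _ => by
      rw [proj_sum w e c r FF horth hr hF j]
  · have h1 : (∑ z, w z * FF z * r z) = ∑ z, w z * r z * FF z :=
      Finset.sum_congr rfl fun z _ => by ring
    rw [h1, expand_sum w e c r FF hF r]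
    simp only [hr, mul_zero, Finset.sum_const_zero, zero_add]

/-- If `P(f(X) = g(Y)) = 1`, the modal-decomposition coefficients of
`f` and `g` agree on the modes with `σ_i = 1` and vanish elsewhere. -/
theorem common_functions_characterization
    [Fintype 𝒳] [Nonempty 𝒳] [Fintype 𝒴] [Nonempty 𝒴]
    (p : 𝒳 × 𝒴 → ℝ) (hp : IsPMF p)
    (hX : ∀ x, 0 < margX p x) (hY : ∀ y, 0 < margY p y)
    (K : ℕ) (σ : Fin (K + 1) → ℝ)
    (f : Fin (K + 1) → 𝒳 → ℝ) (g : Fin (K + 1) → 𝒴 → ℝ)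
    (hσ0 : σ 0 = 1) (hσpos : ∀ i, 0 < σ i)
    (hf0 : ∀ x, f 0 x = 1) (hg0 : ∀ y, g 0 y = 1)
    (horthf : ∀ i j, (∑ x, margX p x * f i x * f j x) = if i = j then 1 else 0)
    (horthg : ∀ i j, (∑ y, margY p y * g i y * g j y) = if i = j then 1 else 0)
    (hdecomp : ∀ x y, p (x, y) = margX p x * margY p y * ∑ i, σ i * f i x * g i y)
    (hσle : ∀ i, σ i ≤ 1)
    (hσmono : ∀ i j : Fin (K + 1), 1 ≤ (i : ℕ) → i ≤ j → σ j ≤ σ i)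
    (k : Fin (K + 1)) (hk1 : σ k = 1) (hkmax : ∀ i, σ i = 1 → i ≤ k)
    (F : 𝒳 → ℝ) (G : 𝒴 → ℝ) (α β : Fin (K + 1) → ℝ) (rf : 𝒳 → ℝ) (rg : 𝒴 → ℝ)
    (hF : ∀ x, F x = (∑ i, α i * f i x) + rf x)
    (hG : ∀ y, G y = (∑ i, β i * g i y) + rg y)
    (hrf : ∀ i, (∑ x, margX p x * rf x * f i x) = 0)
    (hrg : ∀ i, (∑ y, margY p y * rg y * g i y) = 0)
    (hFG : (∑ z : 𝒳 × 𝒴, if F z.1 ≠ G z.2 then p z else 0) = 0) :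
    (∀ i, i ≤ k → α i = β i) ∧
    (∀ i, k < i → α i = 0 ∧ β i = 0) ∧
    (∀ x, rf x = 0) ∧ (∀ y, rg y = 0) := by
  classical
  -- pointwise vanishing
  have hterm : ∀ z : 𝒳 × 𝒴, (if F z.1 ≠ G z.2 then p z else 0) = 0 := fun z =>
    (Finset.sum_eq_zero_iff_of_nonneg (fun z _ => by
      split_ifs
      exacts [hp.1 z, le_rfl])).mp hFG z (Finset.mem_univ z)
  have hzero : ∀ z : 𝒳 × 𝒴, p z * (F z.1 - G z.2) ^ 2 = 0 := by
    intro z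
    by_cases h : F z.1 = G z.2
    · rw [h, sub_self]; ring
    · have := hterm z
      rw [if_pos h] at this
      rw [this, zero_mul]
  -- projections and norms
  have hα : ∀ i, (∑ x, margX p x * F x * f i x) = α i :=
    proj_sum (margX p) f α rf F horthf hrf hF
  have hβ : ∀ i, (∑ y, margY p y * G y * g i y) = β i :=
    proj_sum (margY p) g β rg G horthg hrg hG
  have hnF : (∑ x, margX p x * F x * F x)
      = (∑ i, α i * α i) + ∑ x, margX p x * rf x * rf x :=
    norm_sum (margX p) f α rf F horthf hrf hF
  have hnG : (∑ y, margY p y * G y * G y)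
      = (∑ i, β i * β i) + ∑ y, margY p y * rg y * rg y :=
    norm_sum (margY p) g β rg G horthg hrg hG
  -- marginalized second moments
  have hMF : (∑ z : 𝒳 × 𝒴, p z * F z.1 * F z.1) = ∑ x, margX p x * F x * F x := by
    rw [Fintype.sum_prod_type]
    refine Finset.sum_congr rfl fun x _ => ?_
    show (∑ y, p (x, y) * F x * F x) = _
    rw [← Finset.sum_mul, ← Finset.sum_mul]
    rfl
  have hMG : (∑ z : 𝒳 × 𝒴, p z * G z.2 * G z.2) = ∑ y, margY p y * G y * G y := by
    rw [Fintype.sum_prod_type, Finset.sum_comm]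
    refine Finset.sum_congr rfl fun y _ => ?_
    show (∑ x, p (x, y) * G y * G y) = _
    rw [← Finset.sum_mul, ← Finset.sum_mul]
    rfl
  -- cross term
  have hfac : ∀ (c : ℝ) (A : 𝒳 → ℝ) (B : 𝒴 → ℝ),
      (∑ x, ∑ y, c * (A x * B y)) = c * ((∑ x, A x) * (∑ y, B y)) := by
    intro c A B
    rw [Finset.sum_mul_sum, Finset.mul_sum]
    exact Finset.sum_congr rfl fun x _ => by rw [Finset.mul_sum]
  have hC : (∑ z : 𝒳 × 𝒴, p z * F z.1 * G z.2) = ∑ i, σ i * (α i * β i) := by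
    have expand : ∀ x y, p (x, y) * F x * G y
        = ∑ i, σ i * ((margX p x * F x * f i x) * (margY p y * G y * g i y)) := by
      intro x y
      rw [hdecomp x y, Finset.mul_sum, Finset.sum_mul, Finset.sum_mul]
      exact Finset.sum_congr rfl fun i _ => by ring
    calc (∑ z : 𝒳 × 𝒴, p z * F z.1 * G z.2)
        = ∑ x, ∑ y, ∑ i, σ i *
            ((margX p x * F x * f i x) * (margY p y * G y * g i y)) := by
          rw [Fintype.sum_prod_type]
          exact Finset.sum_congr rfl fun x _ =>
            Finset.sum_congr rfl fun y _ => expand x y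
      _ = ∑ x, ∑ i, ∑ y, σ i *
            ((margX p x * F x * f i x) * (margY p y * G y * g i y)) :=
          Finset.sum_congr rfl fun x _ => Finset.sum_comm
      _ = ∑ i, ∑ x, ∑ y, σ i *
            ((margX p x * F x * f i x) * (margY p y * G y * g i y)) :=
          Finset.sum_comm
      _ = ∑ i, σ i * (α i * β i) := by
          refine Finset.sum_congr rfl fun i _ => ?_
          rw [hfac (σ i) (fun x => margX p x * F x * f i x)
            (fun y => margY p y * G y * g i y), hα i, hβ i]
  -- the key identity
  have key : (∑ x, margX p x * F x * F x) + (∑ y, margY p y * G y * G y)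
      - 2 * (∑ z : 𝒳 × 𝒴, p z * F z.1 * G z.2) = 0 := by
    rw [← hMF, ← hMG, Finset.mul_sum, ← Finset.sum_add_distrib,
      ← Finset.sum_sub_distrib]
    exact Finset.sum_eq_zero fun z _ => by linear_combination hzero z
  -- per-mode decomposition
  set T : Fin (K + 1) → ℝ := fun i =>
    σ i * (α i - β i) ^ 2 + (1 - σ i) * (α i ^ 2 + β i ^ 2) with hT
  have hTsum : (∑ i, T i)
      = (∑ i, α i * α i) + (∑ i, β i * β i) - 2 * ∑ i, σ i * (α i * β i) := by
    rw [Finset.mul_sum, ← Finset.sum_add_distrib, ← Finset.sum_sub_distrib]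
    exact Finset.sum_congr rfl fun i _ => by simp only [hT]; ring
  have hTnn : ∀ i, 0 ≤ T i := by
    intro i
    have h1 : 0 ≤ σ i * (α i - β i) ^ 2 :=
      mul_nonneg (hσpos i).le (sq_nonneg _)
    have h2 : 0 ≤ (1 - σ i) * (α i ^ 2 + β i ^ 2) :=
      mul_nonneg (by linarith [hσle i]) (by positivity)
    simp only [hT]
    linarith
  have hRfnn : ∀ x ∈ Finset.univ, (0:ℝ) ≤ margX p x * rf x * rf x := by
    intro x _
    have : margX p x * rf x * rf x = margX p x * rf x ^ 2 := by ring
    rw [this]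
    exact mul_nonneg (hX x).le (sq_nonneg _)
  have hRgnn : ∀ y ∈ Finset.univ, (0:ℝ) ≤ margY p y * rg y * rg y := by
    intro y _
    have : margY p y * rg y * rg y = margY p y * rg y ^ 2 := by ring
    rw [this]
    exact mul_nonneg (hY y).le (sq_nonneg _)
  have hZero : (∑ i, T i) + (∑ x, margX p x * rf x * rf x)
      + (∑ y, margY p y * rg y * rg y) = 0 := by
    rw [hTsum]
    linarith [key, hnF, hnG, hC]
  have hTnn' : 0 ≤ ∑ i, T i := Finset.sum_nonneg fun i _ => hTnn i
  have hRf0 : (∑ x, margX p x * rf x * rf x) = 0 := by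
    have h1 := Finset.sum_nonneg hRfnn
    have h2 := Finset.sum_nonneg hRgnn
    linarith
  have hRg0 : (∑ y, margY p y * rg y * rg y) = 0 := by
    have h1 := Finset.sum_nonneg hRfnn
    have h2 := Finset.sum_nonneg hRgnn
    linarith
  have hT0 : ∀ i, T i = 0 := by
    have hsum0 : (∑ i, T i) = 0 := by linarith [hRf0, hRg0]
    intro i
    exact (Finset.sum_eq_zero_iff_of_nonneg (fun i _ => hTnn i)).mp hsum0 i
      (Finset.mem_univ i)
  have hparts : ∀ i, σ i * (α i - β i) ^ 2 = 0 ∧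
      (1 - σ i) * (α i ^ 2 + β i ^ 2) = 0 := by
    intro i
    have h0 := hT0 i
    simp only [hT] at h0
    have h1 : 0 ≤ σ i * (α i - β i) ^ 2 := mul_nonneg (hσpos i).le (sq_nonneg _)
    have h2 : 0 ≤ (1 - σ i) * (α i ^ 2 + β i ^ 2) :=
      mul_nonneg (by linarith [hσle i]) (by positivity)
    constructor <;> linarith
  refine ⟨?_, ?_, ?_, ?_⟩
  · -- α i = β i for i ≤ k
    intro i hik
    have hσi1 : σ i = 1 := by
      rcases Nat.eq_zero_or_pos (i : ℕ) with h0 | h1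
      · have : i = 0 := Fin.ext h0
        rw [this, hσ0]
      · refine le_antisymm (hσle i) ?_
        rw [← hk1]
        exact hσmono i k h1 hik
    have h := (hparts i).1
    rw [hσi1, one_mul] at h
    have := pow_eq_zero_iff (n := 2) (by norm_num) |>.mp h
    linarith [sub_eq_zero.mp this]
  · -- α i = β i = 0 for k < i
    intro i hki
    have hσlt : σ i < 1 := by
      rcases lt_or_eq_of_le (hσle i) with h | h
      · exact h
      · exact absurd (hkmax i h) (not_le.mpr hki)
    have h := (hparts i).2
    have hne : (1 - σ i) ≠ 0 := by linarith
    have hsq : α i ^ 2 + β i ^ 2 = 0 := by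
      rcases mul_eq_zero.mp h with h' | h'
      · exact absurd h' hne
      · exact h'
    constructor
    · have : α i ^ 2 = 0 := by nlinarith [sq_nonneg (α i), sq_nonneg (β i)]
      exact pow_eq_zero_iff (n := 2) (by norm_num) |>.mp this
    · have : β i ^ 2 = 0 := by nlinarith [sq_nonneg (α i), sq_nonneg (β i)]
      exact pow_eq_zero_iff (n := 2) (by norm_num) |>.mp this
  · -- rf = 0
    intro x
    have h := (Finset.sum_eq_zero_iff_of_nonneg hRfnn).mp hRf0 x (Finset.mem_univ x)
    have h' : margX p x * (rf x * rf x) = 0 := by rw [← mul_assoc]; exact h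
    rcases mul_eq_zero.mp h' with h'' | h''
    · exact absurd h'' (ne_of_gt (hX x))
    · exact mul_self_eq_zero.mp h''
  · -- rg = 0
    intro y
    have h := (Finset.sum_eq_zero_iff_of_nonneg hRgnn).mp hRg0 y (Finset.mem_univ y)
    have h' : margY p y * (rg y * rg y) = 0 := by rw [← mul_assoc]; exact h
    rcases mul_eq_zero.mp h' with h'' | h''
    · exact absurd h'' (ne_of_gt (hY y))
    · exact mul_self_eq_zero.mp h''

end
end

section
/- Assume the modal decomposition hypothesis holds for p, with additionally σ_1 ≥ σ_2 ≥ … ≥ σ_K and σ_i ≤ 1 for all i; let k = max{0 ≤ i ≤ K : σ_i = 1}. Then the Gács–Körner common information of p equals the Shannon entropy of the pushforward of pX under the map x ↦ (f_0(x), f_1(x), …, f_k(x)) ∈ ℝ^{k+1}: C_GK(p) = H( (f_0,…,f_k)♯pX ). -/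
open Finset

noncomputable section
open scoped Classical

variable {𝒳 𝒴 𝒮 𝒯 : Type*}

/-- Shannon entropy of the pushforward of a finitely supported pmf `r` on `A`
under a map `φ : A → W`. -/
def entropyPush {A W : Type*} [Fintype A] (φ : A → W) (r : A → ℝ) : ℝ :=
  -∑ w ∈ Finset.image φ Finset.univ,
    if 0 < ∑ a ∈ Finset.univ.filter (fun a => φ a = w), r a then
      (∑ a ∈ Finset.univ.filter (fun a => φ a = w), r a)
        * Real.log (∑ a ∈ Finset.univ.filter (fun a => φ a = w), r a)
    else 0

set_option linter.unusedSectionVars false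

lemma sum_xlogx_le {W : Type*} (S : Finset W) (F : W → ℝ) (hF : ∀ v ∈ S, 0 ≤ F v) :
    ∑ v ∈ S, (if 0 < F v then F v * Real.log (F v) else 0)
      ≤ if 0 < ∑ v ∈ S, F v then (∑ v ∈ S, F v) * Real.log (∑ v ∈ S, F v) else 0 := by
  by_cases hQ0 : 0 < ∑ v ∈ S, F v
  · rw [if_pos hQ0]
    have hterm : ∀ v ∈ S, (if 0 < F v then F v * Real.log (F v) else 0)
        ≤ F v * Real.log (∑ v ∈ S, F v) := by
      intro v hv
      by_cases h : 0 < F v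
      · rw [if_pos h]
        exact mul_le_mul_of_nonneg_left (Real.log_le_log h (single_le_sum hF hv)) h.le
      · rw [if_neg h]
        have h0 : F v = 0 := le_antisymm (not_lt.1 h) (hF v hv)
        simp [h0]
    calc ∑ v ∈ S, (if 0 < F v then F v * Real.log (F v) else 0)
        ≤ ∑ v ∈ S, F v * Real.log (∑ v ∈ S, F v) := Finset.sum_le_sum hterm
      _ = (∑ v ∈ S, F v) * Real.log (∑ v ∈ S, F v) := by rw [← Finset.sum_mul]
  · rw [if_neg hQ0]
    have hQ0' : ∑ v ∈ S, F v = 0 := le_antisymm (not_lt.1 hQ0) (Finset.sum_nonneg hF)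
    have hz := (Finset.sum_eq_zero_iff_of_nonneg hF).1 hQ0'
    have : ∑ v ∈ S, (if 0 < F v then F v * Real.log (F v) else 0) = 0 := by
      apply Finset.sum_eq_zero; intro v hv; simp [hz v hv]
    simp [this]

lemma entropy_comp_le {A W : Type*} [Fintype A] [Nonempty A] {n : ℕ} (r : A → ℝ)
    (hr : ∀ a, 0 ≤ r a) (φ : A → W) (s : A → Fin n)
    (hs : ∀ a a', φ a = φ a' → s a = s a') :
    entropy (fun w : Fin n => ∑ a ∈ Finset.univ.filter (fun a => s a = w), r a)
      ≤ entropyPush φ r := by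
  classical
  set h : W → Fin n := fun v => if hv : ∃ a, φ a = v then s hv.choose
    else s (Classical.arbitrary A) with hh
  have hcomp : ∀ a, h (φ a) = s a := by
    intro a
    have hv : ∃ a', φ a' = φ a := ⟨a, rfl⟩
    simp only [hh, dif_pos hv]
    exact hs _ _ hv.choose_spec
  have hq : ∀ w : Fin n, ∑ a ∈ Finset.univ.filter (fun a => s a = w), r a
      = ∑ v ∈ (Finset.image φ Finset.univ).filter (fun v => h v = w),
          (∑ a ∈ Finset.univ.filter (fun a => φ a = v), r a) := by
    intro w
    have hcongr : ∀ v ∈ Finset.image φ Finset.univ,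
        (if h v = w then ∑ a ∈ Finset.univ.filter (fun a => φ a = v), r a else 0)
        = ∑ a ∈ Finset.univ.filter (fun a => φ a = v), (if s a = w then r a else 0) := by
      intro v hv
      by_cases hw : h v = w
      · rw [if_pos hw]
        apply Finset.sum_congr rfl
        intro a ha
        have hav : φ a = v := (Finset.mem_filter.1 ha).2
        rw [if_pos (by rw [← hcomp a, hav, hw])]
      · rw [if_neg hw]
        symm; apply Finset.sum_eq_zero
        intro a ha
        have hav : φ a = v := (Finset.mem_filter.1 ha).2
        exact if_neg (fun hsa => hw (by rw [← hav, hcomp, hsa]))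
    symm
    calc ∑ v ∈ (Finset.image φ Finset.univ).filter (fun v => h v = w),
          (∑ a ∈ Finset.univ.filter (fun a => φ a = v), r a)
        = ∑ v ∈ Finset.image φ Finset.univ,
            if h v = w then (∑ a ∈ Finset.univ.filter (fun a => φ a = v), r a) else 0 :=
          Finset.sum_filter _ _
      _ = ∑ v ∈ Finset.image φ Finset.univ,
            ∑ a ∈ Finset.univ.filter (fun a => φ a = v), (if s a = w then r a else 0) :=
          Finset.sum_congr rfl hcongr
      _ = ∑ a, (if s a = w then r a else 0) :=
          Finset.sum_fiberwise_of_maps_to (fun a _ => Finset.mem_image_of_mem φ (Finset.mem_univ a)) _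
      _ = ∑ a ∈ Finset.univ.filter (fun a => s a = w), r a := (Finset.sum_filter _ _).symm
  unfold entropy entropyPush
  apply neg_le_neg
  calc ∑ v ∈ Finset.image φ Finset.univ,
        (if 0 < ∑ a ∈ Finset.univ.filter (fun a => φ a = v), r a then
          (∑ a ∈ Finset.univ.filter (fun a => φ a = v), r a)
            * Real.log (∑ a ∈ Finset.univ.filter (fun a => φ a = v), r a) else 0)
      = ∑ w : Fin n, ∑ v ∈ (Finset.image φ Finset.univ).filter (fun v => h v = w),
          (if 0 < ∑ a ∈ Finset.univ.filter (fun a => φ a = v), r a then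
            (∑ a ∈ Finset.univ.filter (fun a => φ a = v), r a)
              * Real.log (∑ a ∈ Finset.univ.filter (fun a => φ a = v), r a) else 0) := by
        rw [Finset.sum_fiberwise_of_maps_to (fun v _ => Finset.mem_univ (h v))]
    _ ≤ ∑ w : Fin n, (if 0 < ∑ a ∈ Finset.univ.filter (fun a => s a = w), r a then
          (∑ a ∈ Finset.univ.filter (fun a => s a = w), r a)
            * Real.log (∑ a ∈ Finset.univ.filter (fun a => s a = w), r a) else 0) := by
        apply Finset.sum_le_sum
        intro w _
        rw [hq w]
        exact sum_xlogx_le _ _ (fun v _ => Finset.sum_nonneg (fun a _ => hr a))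

lemma entropy_reindex {A W : Type*} [Fintype A] (r : A → ℝ) (φ : A → W) :
    ∃ (n : ℕ) (s : A → Fin n), (∀ a a', s a = s a' ↔ φ a = φ a') ∧
      entropy (fun w : Fin n => ∑ a ∈ Finset.univ.filter (fun a => s a = w), r a)
        = entropyPush φ r := by
  classical
  set S := Finset.image φ Finset.univ with hS
  set e := S.equivFin with he
  refine ⟨S.card, fun a => e ⟨φ a, Finset.mem_image_of_mem φ (Finset.mem_univ a)⟩, ?_, ?_⟩
  · intro a a'
    constructor
    · intro h
      exact Subtype.ext_iff.1 (e.injective h)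
    · intro h
      exact congrArg e (Subtype.ext h)
  · unfold entropy entropyPush
    congr 1
    rw [← Finset.sum_coe_sort S]
    refine (Fintype.sum_equiv e _ _ ?_).symm
    intro v
    have hfil : Finset.univ.filter (fun a => e ⟨φ a, Finset.mem_image_of_mem φ (Finset.mem_univ a)⟩ = e v)
        = Finset.univ.filter (fun a => φ a = (v : W)) := by
      apply Finset.filter_congr
      intro a _
      constructor
      · intro h
        exact Subtype.ext_iff.1 (e.injective h)
      · intro h
        exact congrArg e (Subtype.ext h)
    simp only [hfil]

section work
variable [Fintype 𝒳] [Nonempty 𝒳] [Fintype 𝒴] [Nonempty 𝒴]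
  (p : 𝒳 × 𝒴 → ℝ) (hp : IsPMF p)
  (hX : ∀ x, 0 < margX p x) (hY : ∀ y, 0 < margY p y)
  (K : ℕ) (σ : Fin (K + 1) → ℝ)
  (f : Fin (K + 1) → 𝒳 → ℝ) (g : Fin (K + 1) → 𝒴 → ℝ)
  (horthf : ∀ i j, (∑ x, margX p x * f i x * f j x) = if i = j then 1 else 0)
  (horthg : ∀ i j, (∑ y, margY p y * g i y * g j y) = if i = j then 1 else 0)
  (hdecomp : ∀ x y, p (x, y) = margX p x * margY p y * ∑ i, σ i * f i x * g i y)

include hdecomp in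
lemma hF1gen : ∀ (a : 𝒳 → ℝ) (b : 𝒴 → ℝ), ∑ z : 𝒳 × 𝒴, p z * (a z.1 * b z.2)
    = ∑ j, σ j * ((∑ x, margX p x * a x * f j x) * (∑ y, margY p y * b y * g j y)) := by
  intro a b
  rw [Fintype.sum_prod_type]
  calc ∑ x, ∑ y, p (x, y) * (a x * b y)
      = ∑ x, ∑ y, ∑ j, σ j * ((margX p x * a x * f j x) * (margY p y * b y * g j y)) := by
        refine Finset.sum_congr rfl fun x _ => Finset.sum_congr rfl fun y _ => ?_
        rw [hdecomp x y, Finset.mul_sum, Finset.sum_mul]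
        exact Finset.sum_congr rfl fun j _ => by ring
    _ = ∑ x, ∑ j, ∑ y, σ j * ((margX p x * a x * f j x) * (margY p y * b y * g j y)) :=
        Finset.sum_congr rfl fun x _ => Finset.sum_comm
    _ = ∑ j, ∑ x, ∑ y, σ j * ((margX p x * a x * f j x) * (margY p y * b y * g j y)) :=
        Finset.sum_comm
    _ = ∑ j, σ j * ((∑ x, margX p x * a x * f j x) * (∑ y, margY p y * b y * g j y)) := by
        refine Finset.sum_congr rfl fun j _ => ?_
        rw [Finset.sum_mul_sum, Finset.mul_sum]
        exact Finset.sum_congr rfl fun x _ => by rw [Finset.mul_sum]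

lemma hmargsumX : ∀ a : 𝒳 → ℝ, ∑ z : 𝒳 × 𝒴, p z * a z.1 = ∑ x, margX p x * a x := by
  intro a
  rw [Fintype.sum_prod_type]
  refine Finset.sum_congr rfl fun x _ => ?_
  show ∑ y, p (x, y) * a x = margX p x * a x
  rw [← Finset.sum_mul]; rfl

lemma hmargsumY : ∀ b : 𝒴 → ℝ, ∑ z : 𝒳 × 𝒴, p z * b z.2 = ∑ y, margY p y * b y := by
  intro b
  rw [Fintype.sum_prod_type_right]
  refine Finset.sum_congr rfl fun y _ => ?_
  show ∑ x, p (x, y) * b y = margY p y * b y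
  rw [← Finset.sum_mul]; rfl

include hdecomp horthf horthg in
lemma hcorr : ∀ i, ∑ z : 𝒳 × 𝒴, p z * (f i z.1 * g i z.2) = σ i := by
  intro i
  rw [hF1gen p K σ f g hdecomp (f i) (g i)]
  have h : ∀ j, σ j * ((∑ x, margX p x * f i x * f j x) * (∑ y, margY p y * g i y * g j y))
      = if i = j then σ j else 0 := by
    intro j; rw [horthf, horthg]; by_cases h : i = j <;> simp [h]
  rw [Finset.sum_congr rfl fun j _ => h j, Finset.sum_ite_eq]
  simp

include horthf in
lemma besselX : ∀ a : 𝒳 → ℝ,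
    ∑ x0, margX p x0 * (a x0 - ∑ i, (∑ x1, margX p x1 * a x1 * f i x1) * f i x0)^2
      = (∑ x0, margX p x0 * (a x0 * a x0))
        - ∑ i, (∑ x1, margX p x1 * a x1 * f i x1)^2 := by
  intro a
  set α : Fin (K+1) → ℝ := fun i => ∑ x1, margX p x1 * a x1 * f i x1 with hα
  have e1 : ∀ x0, margX p x0 * (a x0 - ∑ i, α i * f i x0)^2
      = margX p x0 * (a x0 * a x0)
        - 2 * ∑ i, α i * (margX p x0 * a x0 * f i x0)
        + ∑ i, ∑ j, (α i * α j) * (margX p x0 * f i x0 * f j x0) := by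
    intro x0
    have t2 : ∑ i, α i * (margX p x0 * a x0 * f i x0)
        = margX p x0 * a x0 * ∑ i, α i * f i x0 := by
      rw [Finset.mul_sum]; exact Finset.sum_congr rfl fun i _ => by ring
    have t3 : ∑ i, ∑ j, (α i * α j) * (margX p x0 * f i x0 * f j x0)
        = margX p x0 * ((∑ i, α i * f i x0) * (∑ j, α j * f j x0)) := by
      rw [Finset.sum_mul_sum, Finset.mul_sum]
      refine Finset.sum_congr rfl fun i _ => ?_
      rw [Finset.mul_sum]
      exact Finset.sum_congr rfl fun j _ => by ring
    rw [t2, t3]; ring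
  rw [Finset.sum_congr rfl fun x0 _ => e1 x0, Finset.sum_add_distrib, Finset.sum_sub_distrib]
  have m1 : ∑ x0, 2 * ∑ i, α i * (margX p x0 * a x0 * f i x0) = 2 * ∑ i, (α i)^2 := by
    rw [← Finset.mul_sum]
    congr 1
    rw [Finset.sum_comm]
    exact Finset.sum_congr rfl fun i _ => by rw [← Finset.mul_sum, sq]
  have m2 : ∑ x0, ∑ i, ∑ j, (α i * α j) * (margX p x0 * f i x0 * f j x0)
      = ∑ i, (α i)^2 := by
    rw [Finset.sum_comm]
    refine Finset.sum_congr rfl fun i _ => ?_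
    rw [Finset.sum_comm]
    have h : ∀ j, ∑ x0, (α i * α j) * (margX p x0 * f i x0 * f j x0)
        = α i * α j * (if i = j then 1 else 0) := by
      intro j; rw [← Finset.mul_sum, horthf i j]
    rw [Finset.sum_congr rfl fun j _ => h j]
    simp only [mul_ite, mul_one, mul_zero, Finset.sum_ite_eq, Finset.mem_univ, if_true, sq]
  rw [m1, m2]; ring

include horthg in
lemma besselY : ∀ b : 𝒴 → ℝ,
    ∑ y0, margY p y0 * (b y0 - ∑ i, (∑ y1, margY p y1 * b y1 * g i y1) * g i y0)^2
      = (∑ y0, margY p y0 * (b y0 * b y0))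
        - ∑ i, (∑ y1, margY p y1 * b y1 * g i y1)^2 := by
  intro b
  set β : Fin (K+1) → ℝ := fun i => ∑ y1, margY p y1 * b y1 * g i y1 with hβ
  have e1 : ∀ y0, margY p y0 * (b y0 - ∑ i, β i * g i y0)^2
      = margY p y0 * (b y0 * b y0)
        - 2 * ∑ i, β i * (margY p y0 * b y0 * g i y0)
        + ∑ i, ∑ j, (β i * β j) * (margY p y0 * g i y0 * g j y0) := by
    intro y0
    have t2 : ∑ i, β i * (margY p y0 * b y0 * g i y0)
        = margY p y0 * b y0 * ∑ i, β i * g i y0 := by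
      rw [Finset.mul_sum]; exact Finset.sum_congr rfl fun i _ => by ring
    have t3 : ∑ i, ∑ j, (β i * β j) * (margY p y0 * g i y0 * g j y0)
        = margY p y0 * ((∑ i, β i * g i y0) * (∑ j, β j * g j y0)) := by
      rw [Finset.sum_mul_sum, Finset.mul_sum]
      refine Finset.sum_congr rfl fun i _ => ?_
      rw [Finset.mul_sum]
      exact Finset.sum_congr rfl fun j _ => by ring
    rw [t2, t3]; ring
  rw [Finset.sum_congr rfl fun y0 _ => e1 y0, Finset.sum_add_distrib, Finset.sum_sub_distrib]
  have m1 : ∑ y0, 2 * ∑ i, β i * (margY p y0 * b y0 * g i y0) = 2 * ∑ i, (β i)^2 := by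
    rw [← Finset.mul_sum]
    congr 1
    rw [Finset.sum_comm]
    exact Finset.sum_congr rfl fun i _ => by rw [← Finset.mul_sum, sq]
  have m2 : ∑ y0, ∑ i, ∑ j, (β i * β j) * (margY p y0 * g i y0 * g j y0)
      = ∑ i, (β i)^2 := by
    rw [Finset.sum_comm]
    refine Finset.sum_congr rfl fun i _ => ?_
    rw [Finset.sum_comm]
    have h : ∀ j, ∑ y0, (β i * β j) * (margY p y0 * g i y0 * g j y0)
        = β i * β j * (if i = j then 1 else 0) := by
      intro j; rw [← Finset.mul_sum, horthg i j]
    rw [Finset.sum_congr rfl fun j _ => h j]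
    simp only [mul_ite, mul_one, mul_zero, Finset.sum_ite_eq, Finset.mem_univ, if_true, sq]
  rw [m1, m2]; ring

include hp hdecomp horthf horthg in
lemma lemA (i : Fin (K + 1)) (hσi : σ i = 1) (x : 𝒳) (y : 𝒴) (hpxy : 0 < p (x, y)) :
    f i x = g i y := by
  have hpnn := hp.1
  have hE : ∑ z : 𝒳 × 𝒴, p z * (f i z.1 - g i z.2)^2 = 0 := by
    have hexp : ∀ z : 𝒳 × 𝒴, p z * (f i z.1 - g i z.2)^2
        = p z * (f i z.1 * f i z.1) - 2 * (p z * (f i z.1 * g i z.2))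
          + p z * (g i z.2 * g i z.2) := fun z => by ring
    rw [Finset.sum_congr rfl fun z _ => hexp z, Finset.sum_add_distrib,
      Finset.sum_sub_distrib, ← Finset.mul_sum]
    have h1 : ∑ z : 𝒳 × 𝒴, p z * (f i z.1 * f i z.1) = 1 := by
      have h := hmargsumX p (fun x => f i x * f i x)
      rw [h]
      calc ∑ x, margX p x * (f i x * f i x) = ∑ x, margX p x * f i x * f i x :=
            Finset.sum_congr rfl fun x _ => by ring
        _ = 1 := by rw [horthf i i]; simp
    have h2 : ∑ z : 𝒳 × 𝒴, p z * (g i z.2 * g i z.2) = 1 := by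
      have h := hmargsumY p (fun y => g i y * g i y)
      rw [h]
      calc ∑ y, margY p y * (g i y * g i y) = ∑ y, margY p y * g i y * g i y :=
            Finset.sum_congr rfl fun y _ => by ring
        _ = 1 := by rw [horthg i i]; simp
    have h3 := hcorr p K σ f g horthf horthg hdecomp i
    rw [h1, h2, h3, hσi]; ring
  have hz := (Finset.sum_eq_zero_iff_of_nonneg
    (fun z _ => mul_nonneg (hpnn z) (sq_nonneg _))).1 hE (x, y) (Finset.mem_univ _)
  have h4 : (f i x - g i y)^2 = 0 := by
    rcases mul_eq_zero.1 hz with h | h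
    · exact absurd h (ne_of_gt hpxy)
    · exact h
  have h5 : f i x - g i y = 0 := by
    have := sq_eq_zero_iff.1 h4
    exact this
  linarith

include hp hX hY hdecomp horthf horthg in
lemma lemB (hσpos : ∀ i, 0 < σ i) (hσle : ∀ i, σ i ≤ 1)
    (n : ℕ) (s : 𝒳 → Fin n) (t : 𝒴 → Fin n)
    (hst : (∑ z : 𝒳 × 𝒴, if s z.1 ≠ t z.2 then p z else 0) = 0)
    (x x' : 𝒳) (hff : ∀ i : Fin (K + 1), σ i = 1 → f i x = f i x') :
    s x = s x' := by
  have hpnn := hp.1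
  have hzero : ∀ z : 𝒳 × 𝒴, 0 < p z → s z.1 = t z.2 := by
    intro z hpz
    by_contra hne
    have h := (Finset.sum_eq_zero_iff_of_nonneg
      (fun z _ => by by_cases h : s z.1 ≠ t z.2 <;> simp [h, hpnn z])).1 hst z (Finset.mem_univ z)
    rw [if_pos hne] at h
    exact hpz.ne' h
  set w := s x with hw
  set a : 𝒳 → ℝ := fun x0 => if s x0 = w then 1 else 0 with ha
  set b : 𝒴 → ℝ := fun y0 => if t y0 = w then 1 else 0 with hb
  set α : Fin (K+1) → ℝ := fun i => ∑ x1, margX p x1 * a x1 * f i x1 with hα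
  set β : Fin (K+1) → ℝ := fun i => ∑ y1, margY p y1 * b y1 * g i y1 with hβ
  have hab : ∀ z : 𝒳 × 𝒴, p z * (a z.1 * b z.2) = p z * a z.1 := by
    intro z
    rcases (hpnn z).eq_or_lt with h | h
    · rw [← h]; ring
    · have hstz := hzero z h
      have hba : b z.2 = a z.1 := by simp only [ha, hb, hstz]
      rw [hba]
      have haa : a z.1 * a z.1 = a z.1 := by
        simp only [ha]; by_cases h1 : s z.1 = w <;> simp [h1]
      rw [haa]
  have hab2 : ∀ z : 𝒳 × 𝒴, p z * (a z.1 * b z.2) = p z * b z.2 := by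
    intro z
    rcases (hpnn z).eq_or_lt with h | h
    · rw [← h]; ring
    · have hstz := hzero z h
      have hba : a z.1 = b z.2 := by simp only [ha, hb, hstz]
      rw [hba]
      have hbb : b z.2 * b z.2 = b z.2 := by
        simp only [hb]; by_cases h1 : t z.2 = w <;> simp [h1]
      rw [hbb]
  set A := ∑ x1, margX p x1 * a x1 with hAdef
  have hsumA : ∑ z : 𝒳 × 𝒴, p z * (a z.1 * b z.2) = A := by
    rw [Finset.sum_congr rfl fun z _ => hab z]
    exact hmargsumX p a
  have hsumB : ∑ y1, margY p y1 * b y1 = A := by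
    calc ∑ y1, margY p y1 * b y1 = ∑ z : 𝒳 × 𝒴, p z * b z.2 := (hmargsumY p b).symm
      _ = ∑ z : 𝒳 × 𝒴, p z * (a z.1 * b z.2) := (Finset.sum_congr rfl fun z _ => hab2 z).symm
      _ = A := hsumA
  have hkey1 : A = ∑ j, σ j * (α j * β j) := by
    rw [← hsumA]
    exact hF1gen p K σ f g hdecomp a b
  have hDa' : ∑ x0, margX p x0 * (a x0 - ∑ i, α i * f i x0)^2
      = (∑ x0, margX p x0 * (a x0 * a x0)) - ∑ i, (α i)^2 := besselX p K f horthf a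
  have hDb' : ∑ y0, margY p y0 * (b y0 - ∑ i, β i * g i y0)^2
      = (∑ y0, margY p y0 * (b y0 * b y0)) - ∑ i, (β i)^2 := besselY p K g horthg b
  have haa2 : ∑ x0, margX p x0 * (a x0 * a x0) = A := by
    rw [hAdef]
    refine Finset.sum_congr rfl fun x0 _ => ?_
    simp only [ha]; by_cases h1 : s x0 = w <;> simp [h1]
  have hbb2 : ∑ y0, margY p y0 * (b y0 * b y0) = A := by
    rw [← hsumB]
    refine Finset.sum_congr rfl fun y0 _ => ?_
    simp only [hb]; by_cases h1 : t y0 = w <;> simp [h1]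
  have hDa0 : 0 ≤ ∑ x0, margX p x0 * (a x0 - ∑ i, α i * f i x0)^2 :=
    Finset.sum_nonneg fun x0 _ => mul_nonneg (hX x0).le (sq_nonneg _)
  have hDb0 : 0 ≤ ∑ y0, margY p y0 * (b y0 - ∑ i, β i * g i y0)^2 :=
    Finset.sum_nonneg fun y0 _ => mul_nonneg (hY y0).le (sq_nonneg _)
  have hterm : ∀ j, 0 ≤ (α j)^2 + (β j)^2 - 2 * (σ j * (α j * β j)) := by
    intro j
    nlinarith [mul_nonneg (hσpos j).le (sq_nonneg (α j - β j)),
      mul_nonneg (sub_nonneg.2 (hσle j)) (add_nonneg (sq_nonneg (α j)) (sq_nonneg (β j)))]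
  have hsumterm : ∑ j, ((α j)^2 + (β j)^2 - 2 * (σ j * (α j * β j)))
      = (∑ j, (α j)^2) + (∑ j, (β j)^2) - 2 * A := by
    rw [Finset.sum_sub_distrib, Finset.sum_add_distrib, ← Finset.mul_sum, ← hkey1]
  have hzero2 : ∑ j, ((α j)^2 + (β j)^2 - 2 * (σ j * (α j * β j))) = 0 := by
    have h1 : 0 ≤ ∑ j, ((α j)^2 + (β j)^2 - 2 * (σ j * (α j * β j))) :=
      Finset.sum_nonneg fun j _ => hterm j
    have h2 : ∑ j, ((α j)^2 + (β j)^2 - 2 * (σ j * (α j * β j))) ≤ 0 := by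
      rw [hsumterm]
      linarith [hDa0, hDb0, hDa', hDb', haa2, hbb2]
    linarith
  have h3 : (∑ j, (α j)^2) + (∑ j, (β j)^2) - 2 * A = 0 := by
    rw [← hsumterm]; exact hzero2
  have hDa00 : ∑ x0, margX p x0 * (a x0 - ∑ i, α i * f i x0)^2 = 0 := by
    linarith [hDa0, hDb0, hDa', hDb', haa2, hbb2, h3]
  have haspan : ∀ x0, a x0 = ∑ i, α i * f i x0 := by
    intro x0
    have h := (Finset.sum_eq_zero_iff_of_nonneg
      (fun x1 _ => mul_nonneg (hX x1).le (sq_nonneg _))).1 hDa00 x0 (Finset.mem_univ x0)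
    have h2 : (a x0 - ∑ i, α i * f i x0)^2 = 0 := by
      rcases mul_eq_zero.1 h with h | h
      · exact absurd h (hX x0).ne'
      · exact h
    have h4 := sq_eq_zero_iff.1 h2
    linarith
  have hαz : ∀ i, σ i ≠ 1 → α i = 0 := by
    intro i hi
    have hσi : σ i < 1 := lt_of_le_of_ne (hσle i) hi
    have h0 : (α i)^2 + (β i)^2 - 2 * (σ i * (α i * β i)) = 0 :=
      (Finset.sum_eq_zero_iff_of_nonneg (fun j _ => hterm j)).1 hzero2 i (Finset.mem_univ i)
    have hid : σ i * (α i - β i)^2 + (1 - σ i) * ((α i)^2 + (β i)^2)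
        = (α i)^2 + (β i)^2 - 2 * (σ i * (α i * β i)) := by ring
    have h2 : (1 - σ i) * ((α i)^2 + (β i)^2) ≤ 0 := by
      linarith [mul_nonneg (hσpos i).le (sq_nonneg (α i - β i)), hid, h0]
    have h3' : (α i)^2 + (β i)^2 ≤ 0 := by
      by_contra hc
      push_neg at hc
      exact absurd h2 (not_le.2 (mul_pos (sub_pos.2 hσi) hc))
    have h4 : (α i)^2 = 0 := le_antisymm (by linarith [sq_nonneg (β i)]) (sq_nonneg _)
    exact sq_eq_zero_iff.1 h4
  have hax : a x = 1 := by simp [ha, hw]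
  have haxx' : a x = a x' := by
    rw [haspan x, haspan x']
    refine Finset.sum_congr rfl fun i _ => ?_
    by_cases hi : σ i = 1
    · rw [hff i hi]
    · rw [hαz i hi]; ring
  rw [hax] at haxx'
  by_contra hne
  have hax' : a x' = 0 := by
    simp only [ha]
    rw [if_neg (fun h => hne h.symm)]
  rw [hax'] at haxx'
  exact one_ne_zero haxx'

end work

/-- The Gács–Körner common information equals the entropy of
`(f_0(X), …, f_k(X))`, where `k` is the index of the last unit singular value. -/
theorem gacsKorner_eq_entropy
    [Fintype 𝒳] [Nonempty 𝒳] [Fintype 𝒴] [Nonempty 𝒴]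
    (p : 𝒳 × 𝒴 → ℝ) (hp : IsPMF p)
    (hX : ∀ x, 0 < margX p x) (hY : ∀ y, 0 < margY p y)
    (K : ℕ) (σ : Fin (K + 1) → ℝ)
    (f : Fin (K + 1) → 𝒳 → ℝ) (g : Fin (K + 1) → 𝒴 → ℝ)
    (hσ0 : σ 0 = 1) (hσpos : ∀ i, 0 < σ i)
    (hf0 : ∀ x, f 0 x = 1) (hg0 : ∀ y, g 0 y = 1)
    (horthf : ∀ i j, (∑ x, margX p x * f i x * f j x) = if i = j then 1 else 0)
    (horthg : ∀ i j, (∑ y, margY p y * g i y * g j y) = if i = j then 1 else 0)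
    (hdecomp : ∀ x y, p (x, y) = margX p x * margY p y * ∑ i, σ i * f i x * g i y)
    (hσle : ∀ i, σ i ≤ 1)
    (hσmono : ∀ i j : Fin (K + 1), 1 ≤ (i : ℕ) → i ≤ j → σ j ≤ σ i)
    (k : Fin (K + 1)) (hk1 : σ k = 1) (hkmax : ∀ i, σ i = 1 → i ≤ k) :
    gkCI p
      = entropyPush
          (fun x => fun i : Fin ((k : ℕ) + 1) => f (Fin.castLE k.isLt i) x)
          (margX p) := by
  classical
  set φ : 𝒳 → (Fin ((k : ℕ) + 1) → ℝ) :=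
    fun x => fun i : Fin ((k : ℕ) + 1) => f (Fin.castLE k.isLt i) x with hφdef
  have hone : ∀ i : Fin (K + 1), (i : ℕ) ≤ (k : ℕ) → σ i = 1 := by
    intro i hi
    rcases Nat.eq_zero_or_pos (i : ℕ) with h0 | h1
    · have hi0 : i = 0 := Fin.ext h0
      rw [hi0, hσ0]
    · have h2 := hσmono i k h1 hi
      rw [hk1] at h2
      exact le_antisymm (hσle i) h2
  have hφone : ∀ x x', φ x = φ x' → ∀ i : Fin (K + 1), σ i = 1 → f i x = f i x' := by
    intro x x' h i hσi
    have hik : (i : ℕ) ≤ (k : ℕ) := hkmax i hσi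
    exact congrFun h (⟨(i : ℕ), Nat.lt_succ_of_le hik⟩ : Fin ((k : ℕ) + 1))
  obtain ⟨n, s, hsiff, hsent⟩ := entropy_reindex (margX p) φ
  have hyx : ∀ y : 𝒴, ∃ x, 0 < p (x, y) := by
    intro y
    by_contra h
    push_neg at h
    have h0 : margY p y = 0 :=
      Finset.sum_eq_zero fun x _ => le_antisymm (h x) (hp.1 (x, y))
    exact (hY y).ne' h0
  set t : 𝒴 → Fin n := fun y => s (hyx y).choose with htdef
  have hφg : ∀ x y, 0 < p (x, y) → ∀ i : Fin ((k : ℕ) + 1),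
      φ x i = g (Fin.castLE k.isLt i) y := by
    intro x y h i
    have hσi : σ (Fin.castLE k.isLt i) = 1 := hone _ (Nat.lt_succ_iff.mp i.isLt)
    exact lemA p hp K σ f g horthf horthg hdecomp _ hσi x y h
  have hagree : ∀ z : 𝒳 × 𝒴, 0 < p z → s z.1 = t z.2 := by
    intro z h
    have h2 := (hyx z.2).choose_spec
    have hφeq : φ z.1 = φ ((hyx z.2).choose) := by
      funext i
      rw [hφg z.1 z.2 h i, hφg _ z.2 h2 i]
    exact (hsiff _ _).2 hφeq
  have hgk : gkCI p = sSup {c : ℝ | ∃ (n : ℕ) (f : 𝒳 → Fin n) (g : 𝒴 → Fin n),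
      (∑ z : 𝒳 × 𝒴, if f z.1 ≠ g z.2 then p z else 0) = 0 ∧
      c = entropy (fun w : Fin n =>
        ∑ a ∈ Finset.univ.filter (fun a => f a = w), ∑ b, p (a, b))} := rfl
  rw [hgk]
  have hmem : entropyPush φ (margX p) ∈ {c : ℝ | ∃ (n : ℕ) (f : 𝒳 → Fin n) (g : 𝒴 → Fin n),
      (∑ z : 𝒳 × 𝒴, if f z.1 ≠ g z.2 then p z else 0) = 0 ∧
      c = entropy (fun w : Fin n =>
        ∑ a ∈ Finset.univ.filter (fun a => f a = w), ∑ b, p (a, b))} := by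
    refine ⟨n, s, t, ?_, hsent.symm⟩
    apply Finset.sum_eq_zero
    intro z _
    by_cases h : s z.1 = t z.2
    · rw [if_neg (by simpa using h)]
    · rw [if_pos h]
      exact le_antisymm (not_lt.1 fun hp0 => h (hagree z hp0)) (hp.1 z)
  have hub : ∀ c ∈ {c : ℝ | ∃ (n : ℕ) (f : 𝒳 → Fin n) (g : 𝒴 → Fin n),
      (∑ z : 𝒳 × 𝒴, if f z.1 ≠ g z.2 then p z else 0) = 0 ∧
      c = entropy (fun w : Fin n =>
        ∑ a ∈ Finset.univ.filter (fun a => f a = w), ∑ b, p (a, b))},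
      c ≤ entropyPush φ (margX p) := by
    rintro c ⟨n', s', t', hzero, rfl⟩
    exact entropy_comp_le (margX p) (fun x => (hX x).le) φ s'
      (fun x x' hxx' => lemB p hp hX hY K σ f g horthf horthg hdecomp hσpos hσle
        n' s' t' hzero x x' (hφone x x' hxx'))
  exact le_antisymm (csSup_le ⟨_, hmem⟩ hub) (le_csSup ⟨_, fun c hc => hub c hc⟩ hmem)


end
end

section
/- If s : 𝒳 → 𝒮 and t : 𝒴 → 𝒯 are both sufficient, then for every β > 0 the information-bottleneck Lagrangian value is preserved: L*(p;β) = L*(pST;β), where pST is the joint pmf on 𝒮 × 𝒯 induced by p. -/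
open Finset

noncomputable section
open scoped Classical

variable {𝒳 𝒴 𝒮 𝒯 : Type*}

private lemma ite_pos_mul_eq {a x : ℝ} (ha : 0 ≤ a) :
    (if 0 < a then a * x else 0) = a * x := by
  rcases ha.lt_or_eq with h | h
  · rw [if_pos h]
  · rw [if_neg (by rw [← h]; exact lt_irrefl 0), ← h, zero_mul]

private lemma mutInfo_eq {A B : Type*} [Fintype A] [Fintype B] (q : A × B → ℝ)
    (hq : ∀ z, 0 ≤ q z) :
    mutInfo q = ∑ z : A × B,
      q z * Real.log (q z / ((∑ b, q (z.1, b)) * (∑ a, q (a, z.2)))) := by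
  unfold mutInfo
  exact Finset.sum_congr rfl fun z _ => ite_pos_mul_eq (hq z)

private lemma mutInfo_congr {A B : Type*} [Fintype A] [Fintype B] {q q' : A × B → ℝ}
    (h : ∀ z, q z = q' z) : mutInfo q = mutInfo q' := by
  have : q = q' := funext h
  rw [this]

private lemma sum_fiber {α β : Type*} [Fintype α] [Fintype β]
    (g : α → β) (f : α → ℝ) :
    ∑ b, ∑ a ∈ Finset.univ.filter (fun a => g a = b), f a = ∑ a, f a :=
  Finset.sum_fiberwise _ _ _

private lemma sInf_eq_sInf_of (A B : Set ℝ) (hBA : B ⊆ A) (hA : A.Nonempty)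
    (h : ∀ c ∈ A, ∃ c' ∈ B, c' ≤ c) : sInf A = sInf B := by
  obtain ⟨c0, hc0⟩ := hA
  obtain ⟨c1, hc1B, _⟩ := h c0 hc0
  by_cases hbdd : BddBelow A
  · refine le_antisymm (csInf_le_csInf hbdd ⟨c1, hc1B⟩ hBA) ?_
    refine le_csInf ⟨c0, hc0⟩ fun c hc => ?_
    obtain ⟨c', hc'B, hle⟩ := h c hc
    exact (csInf_le (hbdd.mono hBA) hc'B).trans hle
  · have hbddB : ¬ BddBelow B := by
      rintro ⟨m, hm⟩
      exact hbdd ⟨m, fun c hc => by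
        obtain ⟨c', hc'B, hle⟩ := h c hc; exact (hm hc'B).trans hle⟩
    rw [Real.sInf_of_not_bddBelow hbdd, Real.sInf_of_not_bddBelow hbddB]

private lemma mutInfo_collapse_snd {U Y T' : Type*} [Fintype U] [Fintype Y] [Fintype T']
    (w : Y → ℝ) (hw : ∀ y, 0 < w y)
    (g : U → Y → ℝ) (hg : ∀ u y, 0 ≤ g u y)
    (τ : Y → T') (hconst : ∀ u y y', τ y = τ y' → g u y = g u y') :
    mutInfo (fun z : U × Y => w z.2 * g z.1 z.2)
      = mutInfo (fun z : U × T' =>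
          ∑ y ∈ Finset.univ.filter (fun y => τ y = z.2), w y * g z.1 y) := by
  have hq : ∀ u y, (0:ℝ) ≤ w y * g u y := fun u y => mul_nonneg (hw y).le (hg u y)
  rw [mutInfo_eq _ (fun z => hq z.1 z.2),
      mutInfo_eq _ (fun z => Finset.sum_nonneg fun y _ => hq z.1 y)]
  simp only [Fintype.sum_prod_type]
  refine Finset.sum_congr rfl fun u _ => ?_
  have hrow : ∀ u' : U, (∑ b : T', ∑ y ∈ Finset.univ.filter (fun y => τ y = b), w y * g u' y)
      = ∑ y, w y * g u' y := fun u' => sum_fiber τ _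
  simp only [hrow]
  rw [← sum_fiber τ (fun y => w y * g u y *
    Real.log ((w y * g u y) / ((∑ b, w b * g u b) * (∑ a, w y * g a y))))]
  refine Finset.sum_congr rfl fun τ0 _ => ?_
  rcases (Finset.univ.filter (fun y => τ y = τ0)).eq_empty_or_nonempty with he | ⟨y0, hy0⟩
  · rw [he]; simp [he]
  · have hy0' : τ y0 = τ0 := (Finset.mem_filter.mp hy0).2
    have hgy : ∀ (u' : U) y, y ∈ Finset.univ.filter (fun y => τ y = τ0) → g u' y = g u' y0 := by
      intro u' y hy
      exact hconst u' y y0 (by rw [(Finset.mem_filter.mp hy).2, hy0'])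
    set W : ℝ := ∑ y ∈ Finset.univ.filter (fun y => τ y = τ0), w y with hW
    have hWpos : 0 < W := Finset.sum_pos (fun y _ => hw y) ⟨y0, hy0⟩
    have hQ : ∀ u' : U, (∑ y ∈ Finset.univ.filter (fun y => τ y = τ0), w y * g u' y)
        = W * g u' y0 := by
      intro u'
      rw [hW, Finset.sum_mul]
      exact Finset.sum_congr rfl fun y hy => by rw [hgy u' y hy]
    have key : ∀ y ∈ Finset.univ.filter (fun y => τ y = τ0),
        w y * g u y * Real.log ((w y * g u y) / ((∑ b, w b * g u b) * (∑ a, w y * g a y)))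
          = w y * (g u y0 * Real.log (g u y0 / ((∑ b, w b * g u b) * (∑ a, g a y0)))) := by
      intro y hy
      have h1 : g u y = g u y0 := hgy u y hy
      have h2 : (∑ a, w y * g a y) = w y * ∑ a, g a y0 := by
        rw [← Finset.mul_sum]
        exact congrArg _ (Finset.sum_congr rfl fun a _ => by rw [hgy a y hy])
      rw [h1, h2]
      have h3 : (w y * g u y0) / ((∑ b, w b * g u b) * (w y * ∑ a, g a y0))
          = g u y0 / ((∑ b, w b * g u b) * (∑ a, g a y0)) := by
        rw [show (∑ b, w b * g u b) * (w y * ∑ a, g a y0)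
            = w y * ((∑ b, w b * g u b) * (∑ a, g a y0)) by ring]
        exact mul_div_mul_left _ _ (ne_of_gt (hw y))
      rw [h3]; ring
    rw [Finset.sum_congr rfl key, ← Finset.sum_mul, ← hW, hQ u]
    have hcol : (∑ a, ∑ y ∈ Finset.univ.filter (fun y => τ y = τ0), w y * g a y)
        = W * ∑ a, g a y0 := by
      rw [Finset.mul_sum]
      exact Finset.sum_congr rfl fun a _ => hQ a
    rw [hcol]
    have h4 : (W * g u y0) / ((∑ b, w b * g u b) * (W * ∑ a, g a y0))
        = g u y0 / ((∑ b, w b * g u b) * (∑ a, g a y0)) := by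
      rw [show (∑ b, w b * g u b) * (W * ∑ a, g a y0)
          = W * ((∑ b, w b * g u b) * (∑ a, g a y0)) by ring]
      exact mul_div_mul_left _ _ (ne_of_gt hWpos)
    rw [h4]; ring

private lemma mutInfo_collapse_le {U Y S' : Type*} [Fintype U] [Fintype Y] [Fintype S']
    (q : U → Y → ℝ) (hq : ∀ u y, 0 ≤ q u y) (hcol : ∀ y, 0 < ∑ u, q u y)
    (σ : Y → S') :
    mutInfo (fun z : U × S' => ∑ y ∈ Finset.univ.filter (fun y => σ y = z.2), q z.1 y)
      ≤ mutInfo (fun z : U × Y => q z.1 z.2) := by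
  set Qb : U → S' → ℝ := fun u s0 => ∑ y ∈ Finset.univ.filter (fun y => σ y = s0), q u y
    with hQbdef
  set qU : U → ℝ := fun u => ∑ y, q u y with hqUdef
  set qY : Y → ℝ := fun y => ∑ u, q u y with hqYdef
  set qS : S' → ℝ := fun s0 => ∑ y ∈ Finset.univ.filter (fun y => σ y = s0), qY y
    with hqSdef
  have hQbNN : ∀ u s0, 0 ≤ Qb u s0 := fun u s0 => Finset.sum_nonneg fun y _ => hq u y
  have hmem : ∀ y : Y, y ∈ Finset.univ.filter (fun y' => σ y' = σ y) :=
    fun y => Finset.mem_filter.mpr ⟨Finset.mem_univ _, rfl⟩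
  have hqSge : ∀ y, qY y ≤ qS (σ y) := fun y =>
    Finset.single_le_sum (fun y' _ => (hcol y').le) (hmem y)
  have hqSpos : ∀ y, 0 < qS (σ y) := fun y => lt_of_lt_of_le (hcol y) (hqSge y)
  have hqSnn : ∀ s0, 0 ≤ qS s0 := fun s0 => Finset.sum_nonneg fun y _ => (hcol y).le
  have hqScol : ∀ s0, qS s0 = ∑ u, Qb u s0 := by
    intro s0
    rw [hqSdef, hQbdef]
    simp only [hqYdef]
    exact Finset.sum_comm
  have stepA : mutInfo (fun z : U × S' =>
      ∑ y ∈ Finset.univ.filter (fun y => σ y = z.2), q z.1 y)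
      = ∑ u, ∑ y, q u y * Real.log (Qb u (σ y) / (qU u * qS (σ y))) := by
    rw [mutInfo_eq _ (fun z => Finset.sum_nonneg fun y _ => hq z.1 y)]
    simp only [Fintype.sum_prod_type]
    refine Finset.sum_congr rfl fun u _ => ?_
    have hrow : ∀ u' : U,
        (∑ b : S', ∑ y ∈ Finset.univ.filter (fun y => σ y = b), q u' y) = qU u' :=
      fun u' => sum_fiber σ _
    simp only [hrow]
    rw [← sum_fiber σ (fun y => q u y * Real.log (Qb u (σ y) / (qU u * qS (σ y))))]
    refine Finset.sum_congr rfl fun s0 _ => ?_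
    have : ∀ y ∈ Finset.univ.filter (fun y => σ y = s0),
        q u y * Real.log (Qb u (σ y) / (qU u * qS (σ y)))
          = q u y * Real.log (Qb u s0 / (qU u * qS s0)) := by
      intro y hy
      rw [(Finset.mem_filter.mp hy).2]
    rw [Finset.sum_congr rfl this, ← Finset.sum_mul]
    have hcolsum : (∑ a, ∑ y ∈ Finset.univ.filter (fun y => σ y = s0), q a y) = qS s0 :=
      (hqScol s0).symm
    rw [hcolsum]
  rw [stepA, mutInfo_eq _ (fun z => hq z.1 z.2)]
  simp only [Fintype.sum_prod_type]
  have per : ∀ u y,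
      q u y - qY y * (Qb u (σ y) / qS (σ y))
        ≤ q u y * Real.log (q u y / (qU u * qY y))
          - q u y * Real.log (Qb u (σ y) / (qU u * qS (σ y))) := by
    intro u y
    rcases (hq u y).lt_or_eq with hpos | hzero
    · have hQbpos : 0 < Qb u (σ y) :=
        lt_of_lt_of_le hpos (Finset.single_le_sum (fun y' _ => hq u y') (hmem y))
      have hqUpos : 0 < qU u :=
        lt_of_lt_of_le hpos (Finset.single_le_sum (fun y' _ => hq u y') (Finset.mem_univ y))
      have hqYpos : 0 < qY y := hcol y
      have hSpos := hqSpos y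
      have hXpos : 0 < q u y / (qU u * qY y) := by positivity
      have hYpos : 0 < Qb u (σ y) / (qU u * qS (σ y)) := by positivity
      have hlog : q u y * Real.log (q u y / (qU u * qY y))
          - q u y * Real.log (Qb u (σ y) / (qU u * qS (σ y)))
          = q u y * Real.log ((q u y / (qU u * qY y)) / (Qb u (σ y) / (qU u * qS (σ y)))) := by
        rw [Real.log_div (ne_of_gt hXpos) (ne_of_gt hYpos)]; ring
      set R : ℝ := (q u y / (qU u * qY y)) / (Qb u (σ y) / (qU u * qS (σ y))) with hR
      have hRpos : 0 < R := by positivity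
      have hlb : 1 - R⁻¹ ≤ Real.log R := by
        have := Real.log_le_sub_one_of_pos (inv_pos.mpr hRpos)
        rw [Real.log_inv] at this
        linarith
      have hRinv : q u y * R⁻¹ = qY y * (Qb u (σ y) / qS (σ y)) := by
        rw [hR]
        field_simp
      have := mul_le_mul_of_nonneg_left hlb (hq u y)
      rw [hlog]
      calc q u y - qY y * (Qb u (σ y) / qS (σ y))
          = q u y * (1 - R⁻¹) := by rw [mul_sub, mul_one, hRinv]
        _ ≤ q u y * Real.log R := this
    · rw [← hzero]
      simp only [zero_mul, sub_zero, zero_sub, neg_nonpos, sub_self]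
      have : 0 ≤ qY y * (Qb u (σ y) / qS (σ y)) :=
        mul_nonneg (hcol y).le (div_nonneg (hQbNN _ _) (hqSnn _))
      linarith
  have hzero : ∑ u, ∑ y, (q u y - qY y * (Qb u (σ y) / qS (σ y))) = 0 := by
    have h1 : ∀ u, ∑ y, (q u y - qY y * (Qb u (σ y) / qS (σ y)))
        = qU u - ∑ y, qY y * (Qb u (σ y) / qS (σ y)) := by
      intro u; rw [Finset.sum_sub_distrib]
    have h2 : ∀ u, (∑ y, qY y * (Qb u (σ y) / qS (σ y))) = qU u := by
      intro u
      rw [← sum_fiber σ (fun y => qY y * (Qb u (σ y) / qS (σ y)))]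
      have : ∀ s0, (∑ y ∈ Finset.univ.filter (fun y => σ y = s0),
          qY y * (Qb u (σ y) / qS (σ y))) = Qb u s0 := by
        intro s0
        have hc : ∀ y ∈ Finset.univ.filter (fun y => σ y = s0),
            qY y * (Qb u (σ y) / qS (σ y)) = qY y * (Qb u s0 / qS s0) := by
          intro y hy; rw [(Finset.mem_filter.mp hy).2]
        rw [Finset.sum_congr rfl hc, ← Finset.sum_mul]
        rcases eq_or_ne (qS s0) 0 with hS0 | hS0
        · have hempty : Finset.univ.filter (fun y => σ y = s0) = ∅ := by
            by_contra hne
            obtain ⟨y0, hy0⟩ := Finset.nonempty_iff_ne_empty.mpr hne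
            have : 0 < qS s0 := by
              rw [← (Finset.mem_filter.mp hy0).2] at hS0 ⊢
              exact hqSpos y0
            exact this.ne' hS0
          have hq0 : Qb u s0 = 0 := by rw [hQbdef]; simp [hempty]
          have hy0 : (∑ i ∈ Finset.univ.filter (fun y => σ y = s0), qY i) = qS s0 := rfl
          rw [hy0, hq0, hS0]
          simp
        · have hy0 : (∑ i ∈ Finset.univ.filter (fun y => σ y = s0), qY i) = qS s0 := rfl
          rw [hy0, mul_div_cancel₀ _ hS0]
      rw [Finset.sum_congr rfl fun s0 _ => this s0]
      exact sum_fiber σ (q u)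
    simp only [h1, h2, sub_self, Finset.sum_const_zero]
  have hle : ∑ u, ∑ y, (q u y - qY y * (Qb u (σ y) / qS (σ y)))
      ≤ ∑ u, ∑ y, (q u y * Real.log (q u y / (qU u * qY y))
          - q u y * Real.log (Qb u (σ y) / (qU u * qS (σ y)))) :=
    Finset.sum_le_sum fun u _ => Finset.sum_le_sum fun y _ => per u y
  rw [hzero] at hle
  have hsplit : ∑ u, ∑ y, (q u y * Real.log (q u y / (qU u * qY y))
      - q u y * Real.log (Qb u (σ y) / (qU u * qS (σ y))))
      = (∑ u, ∑ y, q u y * Real.log (q u y / (qU u * qY y)))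
        - ∑ u, ∑ y, q u y * Real.log (Qb u (σ y) / (qU u * qS (σ y))) := by
    rw [← Finset.sum_sub_distrib]
    exact Finset.sum_congr rfl fun u _ => Finset.sum_sub_distrib _ _
  rw [hsplit] at hle
  linarith


/-- The information-bottleneck Lagrangian value is preserved under
sufficient statistics. -/
theorem ib_lagrangian_preserved
    [Fintype 𝒳] [Nonempty 𝒳] [Fintype 𝒴] [Nonempty 𝒴]
    [Fintype 𝒮] [Nonempty 𝒮] [Fintype 𝒯] [Nonempty 𝒯]
    (p : 𝒳 × 𝒴 → ℝ) (hp : IsPMF p)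
    (hX : ∀ x, 0 < margX p x) (hY : ∀ y, 0 < margY p y)
    (s : 𝒳 → 𝒮) (t : 𝒴 → 𝒯)
    (hs : SuffS p s) (ht : SuffT p t)
    (β : ℝ) (hβ : 0 < β) :
    ibL p β = ibL (margST p s t) β := by
  classical
  have hp0 : ∀ z, 0 ≤ p z := hp.1
  have hmXeq : ∀ x, margX p x = ∑ b, p (x, b) := fun x => rfl
  have hmargS_nn : ∀ s0, 0 ≤ margS p s s0 :=
    fun s0 => Finset.sum_nonneg fun x _ => (hX x).le
  have hfiber_empty : ∀ s0 : 𝒮, margS p s s0 = 0 →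
      Finset.univ.filter (fun x => s x = s0) = ∅ := by
    intro s0 h0
    by_contra hne
    have hpos : 0 < margS p s s0 :=
      Finset.sum_pos (fun x _ => hX x) (Finset.nonempty_iff_ne_empty.mpr hne)
    exact hpos.ne' h0
  have hSmargT : ∀ s0, (∑ τ0, margST p s t (s0, τ0)) = margS p s s0 := by
    intro s0
    have h2 : ∀ τ0 : 𝒯, margST p s t (s0, τ0)
        = ∑ x ∈ Finset.univ.filter (fun x => s x = s0),
            ∑ y ∈ Finset.univ.filter (fun y => t y = τ0), p (x, y) := fun τ0 => rfl
    have h3 : margS p s s0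
        = ∑ x ∈ Finset.univ.filter (fun x => s x = s0), ∑ y, p (x, y) := rfl
    simp only [h2]
    rw [h3]
    exact Finset.sum_comm.trans
      (Finset.sum_congr rfl fun x _ => sum_fiber t fun y => p (x, y))
  unfold ibL
  apply sInf_eq_sInf_of
  -- B ⊆ A
  · rintro c ⟨n, r, hr0, hr1, rfl⟩
    refine ⟨n, fun x => r (s x), fun x u => hr0 _ u, fun x => hr1 _, ?_⟩
    have E1 : mutInfo (fun z : Fin n × 𝒳 => r (s z.2) z.1 * ∑ b, p (z.2, b))
        = mutInfo (fun z : Fin n × 𝒮 => r z.2 z.1 * ∑ b, margST p s t (z.2, b)) := by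
      have step := mutInfo_collapse_snd (fun x => ∑ b, p (x, b))
        (fun x => hX x)
        (fun u x => r (s x) u) (fun u x => hr0 _ u) s
        (fun u x x' hxx => by simp only [hxx])
      rw [mutInfo_congr (q' := fun z : Fin n × 𝒳 => (∑ b, p (z.2, b)) * r (s z.2) z.1)
            (fun z => mul_comm _ _), step]
      refine mutInfo_congr fun z => ?_
      obtain ⟨u, s0⟩ := z
      have hc : ∀ x ∈ Finset.univ.filter (fun x => s x = s0),
          (∑ b, p (x, b)) * r (s x) u = (∑ b, p (x, b)) * r s0 u := by
        intro x hx; rw [(Finset.mem_filter.mp hx).2]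
      rw [Finset.sum_congr rfl hc, ← Finset.sum_mul, mul_comm]
      congr 1
      rw [hSmargT s0]
      rfl
    have E2 : mutInfo (fun z : Fin n × 𝒴 => ∑ x, r (s x) z.1 * p (x, z.2))
        = mutInfo (fun z : Fin n × 𝒯 => ∑ s0, r s0 z.1 * margST p s t (s0, z.2)) := by
      have hg : ∀ (u : Fin n) (y : 𝒴), 0 ≤ ∑ x, r (s x) u * (p (x, y) / margY p y) :=
        fun u y => Finset.sum_nonneg fun x _ =>
          mul_nonneg (hr0 _ u) (div_nonneg (hp0 (x, y)) (hY y).le)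
      have hconst : ∀ (u : Fin n) (y y' : 𝒴), t y = t y' →
          (∑ x, r (s x) u * (p (x, y) / margY p y))
            = ∑ x, r (s x) u * (p (x, y') / margY p y') := by
        intro u y y' hty
        refine Finset.sum_congr rfl fun x _ => ?_
        congr 1
        rw [div_eq_div_iff (hY y).ne' (hY y').ne']
        exact ht x y y' hty
      have hwg : ∀ (u : Fin n) (y : 𝒴),
          margY p y * ∑ x, r (s x) u * (p (x, y) / margY p y)
            = ∑ x, r (s x) u * p (x, y) := by
        intro u y
        rw [Finset.mul_sum]
        refine Finset.sum_congr rfl fun x _ => ?_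
        have hYne : margY p y ≠ 0 := (hY y).ne'
        field_simp
      have step := mutInfo_collapse_snd (margY p) hY
        (fun u y => ∑ x, r (s x) u * (p (x, y) / margY p y)) hg t hconst
      rw [mutInfo_congr (q' := fun z : Fin n × 𝒴 =>
            margY p z.2 * ∑ x, r (s x) z.1 * (p (x, z.2) / margY p z.2))
            (fun z => (hwg z.1 z.2).symm), step]
      refine mutInfo_congr fun z => ?_
      obtain ⟨u, τ0⟩ := z
      rw [Finset.sum_congr rfl fun y (_ : y ∈ Finset.univ.filter (fun y => t y = τ0)) =>
        hwg u y]
      rw [Finset.sum_comm]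
      simp only [← Finset.mul_sum]
      rw [← sum_fiber s (fun x => r (s x) u *
        ∑ y ∈ Finset.univ.filter (fun y => t y = τ0), p (x, y))]
      refine Finset.sum_congr rfl fun s0 _ => ?_
      have hc : ∀ x ∈ Finset.univ.filter (fun x => s x = s0),
          r (s x) u * (∑ y ∈ Finset.univ.filter (fun y => t y = τ0), p (x, y))
            = r s0 u * (∑ y ∈ Finset.univ.filter (fun y => t y = τ0), p (x, y)) := by
        intro x hx; rw [(Finset.mem_filter.mp hx).2]
      rw [Finset.sum_congr rfl hc, ← Finset.mul_sum]
      rfl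
    show _ = mutInfo (fun z : Fin n × 𝒳 => r (s z.2) z.1 * ∑ b, p (z.2, b))
        - β * mutInfo (fun z : Fin n × 𝒴 => ∑ x, r (s x) z.1 * p (x, z.2))
    rw [E1, E2]
  -- Nonempty
  · exact ⟨_, 1, fun _ _ => (1:ℝ), fun _ _ => zero_le_one, fun _ => by simp, rfl⟩
  -- approximation from below
  · rintro c ⟨n, r, hr0, hr1, rfl⟩
    have hncast : (n : ℝ) ≠ 0 := by
      intro h0
      have h0' : n = 0 := Nat.cast_eq_zero.mp h0
      have h1 := hr1 (Classical.arbitrary 𝒳)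
      subst h0'
      simp at h1
    set rt : 𝒮 → Fin n → ℝ := fun s0 u =>
      if 0 < margS p s s0 then
        (∑ x ∈ Finset.univ.filter (fun x => s x = s0), r x u * margX p x) / margS p s s0
      else (n : ℝ)⁻¹ with hrt
    have hrt0 : ∀ (s0 : 𝒮) (u : Fin n), 0 ≤ rt s0 u := by
      intro s0 u
      rw [hrt]
      dsimp only
      split_ifs with h
      · exact div_nonneg (Finset.sum_nonneg fun x _ =>
          mul_nonneg (hr0 x u) (hX x).le) h.le
      · positivity
    have hK : ∀ (s0 : 𝒮) (u : Fin n), rt s0 u * margS p s s0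
        = ∑ x ∈ Finset.univ.filter (fun x => s x = s0), r x u * margX p x := by
      intro s0 u
      rw [hrt]
      dsimp only
      split_ifs with h
      · exact div_mul_cancel₀ _ h.ne'
      · have h0 : margS p s s0 = 0 := le_antisymm (not_lt.mp h) (hmargS_nn s0)
        rw [h0, mul_zero, hfiber_empty s0 h0, Finset.sum_empty]
    have hrt1 : ∀ s0 : 𝒮, ∑ u, rt s0 u = 1 := by
      intro s0
      rw [hrt]
      dsimp only
      split_ifs with h
      · rw [← Finset.sum_div, Finset.sum_comm]
        have hc : ∀ x ∈ Finset.univ.filter (fun x => s x = s0),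
            (∑ u : Fin n, r x u * margX p x) = margX p x := by
          intro x _
          rw [← Finset.sum_mul, hr1 x, one_mul]
        rw [Finset.sum_congr rfl hc]
        exact div_self h.ne'
      · rw [Finset.sum_const, Finset.card_univ, Fintype.card_fin, nsmul_eq_mul]
        exact mul_inv_cancel₀ hncast
    have hJs : ∀ (s0 : 𝒮) (u : Fin n) (y : 𝒴),
        rt s0 u * ∑ x ∈ Finset.univ.filter (fun x => s x = s0), p (x, y)
          = ∑ x ∈ Finset.univ.filter (fun x => s x = s0), r x u * p (x, y) := by
      intro s0 u y
      by_cases h : 0 < margS p s s0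
      · have hx : ∀ x ∈ Finset.univ.filter (fun x => s x = s0),
            p (x, y) * margS p s s0
              = margX p x * ∑ x' ∈ Finset.univ.filter (fun x' => s x' = s0), p (x', y) := by
          intro x hxm
          have hsx : s x = s0 := (Finset.mem_filter.mp hxm).2
          have hms : margS p s s0
              = ∑ x' ∈ Finset.univ.filter (fun x' => s x' = s0), margX p x' := rfl
          rw [hms, Finset.mul_sum, Finset.mul_sum]
          refine Finset.sum_congr rfl fun x' hx' => ?_
          have hsx' : s x' = s0 := (Finset.mem_filter.mp hx').2
          rw [mul_comm (margX p x) (p (x', y))]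
          exact hs x x' y (by rw [hsx, hsx'])
        have key : (∑ x ∈ Finset.univ.filter (fun x => s x = s0), r x u * p (x, y))
            * margS p s s0
            = (∑ x ∈ Finset.univ.filter (fun x => s x = s0), r x u * margX p x)
              * ∑ x' ∈ Finset.univ.filter (fun x' => s x' = s0), p (x', y) := by
          rw [Finset.sum_mul, Finset.sum_mul]
          refine Finset.sum_congr rfl fun x hxm => ?_
          rw [mul_assoc, hx x hxm, mul_assoc]
        rw [hrt]
        dsimp only
        rw [if_pos h, div_mul_eq_mul_div, div_eq_iff h.ne']
        exact key.symm
      · have h0 : margS p s s0 = 0 := le_antisymm (not_lt.mp h) (hmargS_nn s0)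
        rw [hfiber_empty s0 h0]
        simp
    have I1 : mutInfo (fun z : Fin n × 𝒮 => rt z.2 z.1 * ∑ b, margST p s t (z.2, b))
        ≤ mutInfo (fun z : Fin n × 𝒳 => r z.2 z.1 * ∑ b, p (z.2, b)) := by
      have hcol : ∀ x, 0 < ∑ u : Fin n, r x u * ∑ b, p (x, b) := by
        intro x
        rw [← Finset.sum_mul, hr1 x, one_mul, ← hmXeq]
        exact hX x
      have step := mutInfo_collapse_le (fun (u : Fin n) x => r x u * ∑ b, p (x, b))
        (fun u x => mul_nonneg (hr0 x u) (Finset.sum_nonneg fun b _ => hp0 (x, b)))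
        hcol s
      refine le_trans (le_of_eq ?_) step
      refine mutInfo_congr fun z => ?_
      obtain ⟨u, s0⟩ := z
      rw [hSmargT s0, hK s0 u]
      refine Finset.sum_congr rfl fun x _ => ?_
      rw [hmXeq]
    have I2 : mutInfo (fun z : Fin n × 𝒴 => ∑ x, r x z.1 * p (x, z.2))
        = mutInfo (fun z : Fin n × 𝒯 => ∑ s0, rt s0 z.1 * margST p s t (s0, z.2)) := by
      have hg : ∀ (u : Fin n) (y : 𝒴), 0 ≤ ∑ s0, rt s0 u *
          ((∑ x ∈ Finset.univ.filter (fun x => s x = s0), p (x, y)) / margY p y) :=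
        fun u y => Finset.sum_nonneg fun s0 _ => mul_nonneg (hrt0 s0 u)
          (div_nonneg (Finset.sum_nonneg fun x _ => hp0 (x, y)) (hY y).le)
      have hconst : ∀ (u : Fin n) (y y' : 𝒴), t y = t y' →
          (∑ s0, rt s0 u *
            ((∑ x ∈ Finset.univ.filter (fun x => s x = s0), p (x, y)) / margY p y))
          = ∑ s0, rt s0 u *
            ((∑ x ∈ Finset.univ.filter (fun x => s x = s0), p (x, y')) / margY p y') := by
        intro u y y' hty
        refine Finset.sum_congr rfl fun s0 _ => ?_
        congr 1
        rw [div_eq_div_iff (hY y).ne' (hY y').ne', Finset.sum_mul, Finset.sum_mul]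
        exact Finset.sum_congr rfl fun x _ => ht x y y' hty
      have hwg : ∀ (u : Fin n) (y : 𝒴),
          margY p y * ∑ s0, rt s0 u *
            ((∑ x ∈ Finset.univ.filter (fun x => s x = s0), p (x, y)) / margY p y)
          = ∑ s0, rt s0 u * ∑ x ∈ Finset.univ.filter (fun x => s x = s0), p (x, y) := by
        intro u y
        rw [Finset.mul_sum]
        refine Finset.sum_congr rfl fun s0 _ => ?_
        have hYne : margY p y ≠ 0 := (hY y).ne'
        field_simp
      have step := mutInfo_collapse_snd (margY p) hY
        (fun u y => ∑ s0, rt s0 u *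
          ((∑ x ∈ Finset.univ.filter (fun x => s x = s0), p (x, y)) / margY p y))
        hg t hconst
      have hleft : ∀ z : Fin n × 𝒴, (∑ x, r x z.1 * p (x, z.2))
          = margY p z.2 * ∑ s0, rt s0 z.1 *
            ((∑ x ∈ Finset.univ.filter (fun x => s x = s0), p (x, z.2)) / margY p z.2) := by
        intro z
        rw [hwg]
        rw [Finset.sum_congr rfl fun s0 (_ : s0 ∈ Finset.univ) => hJs s0 z.1 z.2]
        exact (sum_fiber s (fun x => r x z.1 * p (x, z.2))).symm
      rw [mutInfo_congr hleft, step]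
      refine mutInfo_congr fun z => ?_
      obtain ⟨u, τ0⟩ := z
      rw [Finset.sum_congr rfl fun y (hy : y ∈ Finset.univ.filter (fun y => t y = τ0)) =>
        hwg u y]
      rw [Finset.sum_comm]
      refine Finset.sum_congr rfl fun s0 _ => ?_
      rw [← Finset.mul_sum]
      congr 1
      rw [Finset.sum_comm]
      rfl
    refine ⟨_, ⟨n, rt, hrt0, hrt1, rfl⟩, ?_⟩
    rw [← I2]
    exact sub_le_sub_right I1 _

end
end

section
/- Let 𝒳, 𝒰, 𝒱 be nonempty finite types, m a joint pmf on 𝒳 × 𝒰 whose 𝒳-marginal mX(x) = ∑_u m(x,u) is strictly positive, and v : 𝒳 → 𝒱. Define mV(v0) = ∑_{x : v(x)=v0} mX(x), mUV(u,v0) = ∑_{x : v(x)=v0} m(x,u), and m'(x,u) = mX(x)·mUV(u,v(x))/mV(v(x)). Then m' is a joint pmf on 𝒳 × 𝒰 with 𝒳-marginal mX; its (U,V)-marginal agrees with that of m, i.e. ∑_{x : v(x)=v0} m'(x,u) = mUV(u,v0) for all u, v0; and the Markov relation U'−V−X holds under m': m'(x,u)·mV(v(x)) = mX(x)·(∑_{x'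 : v(x')=v(x)} m'(x',u)) for all x, u. -/
open Finset

noncomputable section
open scoped Classical

variable {𝒳 𝒴 𝒮 𝒯 : Type*}

/-- Marginal of a joint pmf `m` on `𝒳 × 𝒰` on its first coordinate. -/
def mMargX {𝒰 : Type*} [Fintype 𝒰] (m : 𝒳 × 𝒰 → ℝ) (x : 𝒳) : ℝ := ∑ u, m (x, u)

/-- Joint distribution of `(U, V) = (U, v(X))`. -/
def mMargUV {𝒰 𝒱 : Type*} [Fintype 𝒳] (m : 𝒳 × 𝒰 → ℝ) (v : 𝒳 → 𝒱)
    (u : 𝒰) (v0 : 𝒱) : ℝ :=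
  ∑ x ∈ Finset.univ.filter (fun x => v x = v0), m (x, u)

/-- Distribution of `V = v(X)`. -/
def mMargV {𝒰 𝒱 : Type*} [Fintype 𝒳] [Fintype 𝒰] (m : 𝒳 × 𝒰 → ℝ) (v : 𝒳 → 𝒱)
    (v0 : 𝒱) : ℝ :=
  ∑ x ∈ Finset.univ.filter (fun x => v x = v0), mMargX m x

/-- The constructed joint pmf `m'(x,u) = mX(x) · mUV(u, v(x)) / mV(v(x))`. -/
def mPrime {𝒰 𝒱 : Type*} [Fintype 𝒳] [Fintype 𝒰] (m : 𝒳 × 𝒰 → ℝ) (v : 𝒳 → 𝒱)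
    (z : 𝒳 × 𝒰) : ℝ :=
  mMargX m z.1 * mMargUV m v z.2 (v z.1) / mMargV m v (v z.1)

/-- The construction `m'` is a pmf with the same `X`-marginal and
the same `(U,V)`-marginal as `m`, and satisfies the Markov relation `U' - V - X`. -/
theorem construction_lemma
    {𝒳 𝒰 𝒱 : Type*}
    [Fintype 𝒳] [Nonempty 𝒳] [Fintype 𝒰] [Nonempty 𝒰] [Fintype 𝒱] [Nonempty 𝒱]
    (m : 𝒳 × 𝒰 → ℝ) (hm : IsPMF m)
    (hmX : ∀ x, 0 < mMargX m x)
    (v : 𝒳 → 𝒱) :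
    IsPMF (mPrime m v) ∧
    (∀ x, ∑ u, mPrime m v (x, u) = mMargX m x) ∧
    (∀ u v0, (∑ x ∈ Finset.univ.filter (fun x => v x = v0), mPrime m v (x, u))
      = mMargUV m v u v0) ∧
    (∀ x u, mPrime m v (x, u) * mMargV m v (v x)
      = mMargX m x
        * ∑ x' ∈ Finset.univ.filter (fun x' => v x' = v x), mPrime m v (x', u)) := by
  have hVpos : ∀ x : 𝒳, 0 < mMargV m v (v x) := by
    intro x
    apply Finset.sum_pos
    · intro i _; exact hmX i
    · exact ⟨x, by simp⟩
  have hUVnn : ∀ u v0, 0 ≤ mMargUV m v u v0 := by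
    intro u v0
    exact Finset.sum_nonneg fun i _ => hm.1 _
  have hsumUV : ∀ v0, ∑ u, mMargUV m v u v0 = mMargV m v v0 := by
    intro v0
    simp only [mMargUV, mMargV, mMargX]
    rw [Finset.sum_comm]
  have hXmarg : ∀ x, ∑ u, mPrime m v (x, u) = mMargX m x := by
    intro x
    simp only [mPrime]
    rw [← Finset.sum_div, ← Finset.mul_sum, hsumUV]
    exact mul_div_cancel_right₀ _ (ne_of_gt (hVpos x))
  have hUVmarg : ∀ u v0,
      (∑ x ∈ Finset.univ.filter (fun x => v x = v0), mPrime m v (x, u))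
        = mMargUV m v u v0 := by
    intro u v0
    rcases eq_or_ne (Finset.univ.filter (fun x => v x = v0)) ∅ with h | h
    · rw [mMargUV, h]; simp
    · obtain ⟨x0, hx0⟩ := Finset.nonempty_iff_ne_empty.2 h
      have hvx0 : v x0 = v0 := by simpa using hx0
      have hVpos0 : 0 < mMargV m v v0 := hvx0 ▸ hVpos x0
      have : (∑ x ∈ Finset.univ.filter (fun x => v x = v0), mPrime m v (x, u))
          = (∑ x ∈ Finset.univ.filter (fun x => v x = v0), mMargX m x)
            * mMargUV m v u v0 / mMargV m v v0 := by
        rw [Finset.sum_mul, Finset.sum_div]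
        apply Finset.sum_congr rfl
        intro x hx
        have : v x = v0 := by simpa using hx
        simp [mPrime, this]
      rw [this]
      rw [show (∑ x ∈ Finset.univ.filter (fun x => v x = v0), mMargX m x)
        = mMargV m v v0 from rfl]
      field_simp
  refine ⟨⟨fun z => div_nonneg (mul_nonneg (le_of_lt (hmX z.1)) (hUVnn _ _))
      (le_of_lt (hVpos z.1)), ?_⟩, hXmarg, hUVmarg, ?_⟩
  · rw [Fintype.sum_prod_type]
    simp only [hXmarg]
    have := hm.2
    rw [Fintype.sum_prod_type] at this
    simpa [mMargX] using this
  · intro x u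
    rw [hUVmarg u (v x)]
    simp only [mPrime]
    exact div_mul_cancel₀ _ (ne_of_gt (hVpos x))

end
end

section
/- Suppose s : 𝒳 → 𝒮 is sufficient (X−S−Y). Let 𝒰 be a nonempty finite type and q a joint pmf on 𝒰 × 𝒳 × 𝒴 whose (𝒳,𝒴)-marginal is p and which satisfies U−X−Y: q(u,x,y)·pX(x) = qUX(u,x)·p(x,y) for all u,x,y, where qUX(u,x) = ∑_y q(u,x,y). Then there exists a joint pmf q' on 𝒰 × 𝒳 × 𝒴 with (𝒳,𝒴)-marginal p such that: (i) the chain U−S−X−Y holds: q'(u,x,y)·pS(s(x)) = q'US(u,s(x))·p(x,y) for all u,x,y, where q'US(u,s0) = ∑_{x : s(x)=s0} ∑_y q'(u,x,y); (ii) q'US = qUS; (iii) q'UY = qUY, where qUY(u,y) = ∑_x q(u,x,y); (iv) I_{q'}(U;X) = I_q(U;X) − I_q(U;X|S), where I_q(U;X|S) = ∑_{(u,x) : qUX(u,x)>0} qUX(u,x)·log( qUX(u,x)·pS(s(x)) / (qUS(u,s(x))·pX(x)) ); and (v) I_{q'}(U;Y) = I_q(U;Y). -/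
open Finset

noncomputable section
open scoped Classical

variable {𝒳 𝒴 𝒮 𝒯 : Type*}

section IBConstruction

variable {𝒰 : Type*}

/-- Joint distribution of `(U, X)` under a joint pmf `q` on `𝒰 × 𝒳 × 𝒴`. -/
def margUX [Fintype 𝒴] (q : 𝒰 × 𝒳 × 𝒴 → ℝ) (u : 𝒰) (x : 𝒳) : ℝ :=
  ∑ y, q (u, x, y)

/-- Joint distribution of `(U, Y)` under a joint pmf `q` on `𝒰 × 𝒳 × 𝒴`. -/
def margUY [Fintype 𝒳] (q : 𝒰 × 𝒳 × 𝒴 → ℝ) (u : 𝒰) (y : 𝒴) : ℝ :=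
  ∑ x, q (u, x, y)

/-- Joint distribution of `(U, S) = (U, s(X))` under a joint pmf `q` on `𝒰 × 𝒳 × 𝒴`. -/
def margUS [Fintype 𝒳] [Fintype 𝒴] (q : 𝒰 × 𝒳 × 𝒴 → ℝ) (s : 𝒳 → 𝒮)
    (u : 𝒰) (s0 : 𝒮) : ℝ :=
  ∑ x ∈ Finset.univ.filter (fun x => s x = s0), margUX q u x

private lemma log_diff_aux {A B P Q US : ℝ} (hA : 0 < A) (hB : 0 < B) (hP : 0 < P)
    (hQ : 0 < Q) (hUS : 0 < US) :
    Real.log (A / (Q * P)) - Real.log (A * B / (US * P)) = Real.log (US / (Q * B)) := by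
  rw [Real.log_div hA.ne' (by positivity), Real.log_div (by positivity) (by positivity),
      Real.log_div hUS.ne' (by positivity), Real.log_mul hQ.ne' hP.ne',
      Real.log_mul hA.ne' hB.ne', Real.log_mul hUS.ne' hP.ne', Real.log_mul hQ.ne' hB.ne']
  ring

/-- Construction of the auxiliary variable `U'` for the information
bottleneck (Lemma 8 of the paper). -/
theorem ib_construction
    [Fintype 𝒳] [Nonempty 𝒳] [Fintype 𝒴] [Nonempty 𝒴]
    [Fintype 𝒮] [Nonempty 𝒮]
    (p : 𝒳 × 𝒴 → ℝ) (hp : IsPMF p)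
    (hX : ∀ x, 0 < margX p x) (hY : ∀ y, 0 < margY p y)
    (s : 𝒳 → 𝒮) (hs : SuffS p s)
    [Fintype 𝒰] [Nonempty 𝒰]
    (q : 𝒰 × 𝒳 × 𝒴 → ℝ) (hq : IsPMF q)
    (hmarg : ∀ x y, ∑ u, q (u, x, y) = p (x, y))
    (hUXY : ∀ u x y, q (u, x, y) * margX p x = margUX q u x * p (x, y)) :
    ∃ q' : 𝒰 × 𝒳 × 𝒴 → ℝ,
      IsPMF q' ∧
      (∀ x y, ∑ u, q' (u, x, y) = p (x, y)) ∧
      -- (i) Markov chain U' - S - X - Y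
      (∀ u x y, q' (u, x, y) * margS p s (s x) = margUS q' s u (s x) * p (x, y)) ∧
      -- (ii) (U', S) ~ (U, S)
      (∀ u s0, margUS q' s u s0 = margUS q s u s0) ∧
      -- (iii) (U', Y) ~ (U, Y)
      (∀ u y, margUY q' u y = margUY q u y) ∧
      -- (iv) I_{q'}(U; X) = I_q(U; X) - I_q(U; X | S)
      mutInfo (fun z : 𝒰 × 𝒳 => margUX q' z.1 z.2)
        = mutInfo (fun z : 𝒰 × 𝒳 => margUX q z.1 z.2)
          - ∑ z : 𝒰 × 𝒳, (if 0 < margUX q z.1 z.2 then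
              margUX q z.1 z.2 * Real.log (margUX q z.1 z.2 * margS p s (s z.2)
                / (margUS q s z.1 (s z.2) * margX p z.2)) else 0) ∧
      -- (v) I_{q'}(U; Y) = I_q(U; Y)
      mutInfo (fun z : 𝒰 × 𝒴 => margUY q' z.1 z.2)
        = mutInfo (fun z : 𝒰 × 𝒴 => margUY q z.1 z.2) := by
  obtain ⟨hqnn, hqsum⟩ := hq
  have hpnn : ∀ z, 0 ≤ p z := hp.1
  have hSpos : ∀ x, 0 < margS p s (s x) := by
    intro x
    have hx : x ∈ Finset.univ.filter (fun x' => s x' = s x) := by simp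
    have h2 : margX p x ≤ ∑ x' ∈ Finset.univ.filter (fun x' => s x' = s x), margX p x' :=
      Finset.single_le_sum (fun i _ => (hX i).le) hx
    exact lt_of_lt_of_le (hX x) h2
  have hUXnn : ∀ u x, 0 ≤ margUX q u x := fun u x =>
    Finset.sum_nonneg fun y _ => hqnn _
  have hUSnn : ∀ u s0, 0 ≤ margUS q s u s0 := fun u s0 =>
    Finset.sum_nonneg fun x _ => hUXnn u x
  have hUXle : ∀ u x, margUX q u x ≤ margUS q s u (s x) := by
    intro u x
    have hx : x ∈ Finset.univ.filter (fun x' => s x' = s x) := by simp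
    exact Finset.single_le_sum (fun i _ => hUXnn u i) hx
  have hcol : ∀ x, ∑ u, margUX q u x = margX p x := by
    intro x
    show (∑ u, ∑ y, q (u, x, y)) = _
    rw [Finset.sum_comm]
    exact Finset.sum_congr rfl fun y _ => hmarg x y
  have hcolS : ∀ s0, ∑ u, margUS q s u s0 = margS p s s0 := by
    intro s0
    show (∑ u, ∑ x ∈ Finset.univ.filter (fun x => s x = s0), margUX q u x) = _
    rw [Finset.sum_comm]
    exact Finset.sum_congr rfl fun x _ => hcol x
  have hqUle : ∀ u s0, margUS q s u s0 ≤ ∑ x, margUX q u x := by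
    intro u s0
    have h0 : (∑ s0', margUS q s u s0') = ∑ x, margUX q u x :=
      Finset.sum_fiberwise Finset.univ s (fun x => margUX q u x)
    rw [← h0]
    exact Finset.single_le_sum (fun i _ => hUSnn u i) (Finset.mem_univ s0)
  have hratio : ∀ x x' y, s x = s x' → p (x, y) / margX p x = p (x', y) / margX p x' := by
    intro x x' y h
    rw [div_eq_div_iff (hX x).ne' (hX x').ne']
    exact hs x x' y h
  have hqeval : ∀ u x y, q (u, x, y) = margUX q u x * (p (x, y) / margX p x) := by
    intro u x y
    have hx := (hX x).ne'
    field_simp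
    linear_combination hUXY u x y
  set q' : 𝒰 × 𝒳 × 𝒴 → ℝ :=
    fun z => margUS q s z.1 (s z.2.1) * p z.2 / margS p s (s z.2.1) with hq'def
  have hq'eval : ∀ u x y, q' (u, x, y) = margUS q s u (s x) * p (x, y) / margS p s (s x) := by
    intro u x y
    simp only [hq'def]
  have hq'nn : ∀ z, 0 ≤ q' z := by
    intro z
    rw [hq'def]
    exact div_nonneg (mul_nonneg (hUSnn _ _) (hpnn _)) (le_of_lt (hSpos z.2.1))
  have hmargq' : ∀ x y, ∑ u, q' (u, x, y) = p (x, y) := by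
    intro x y
    calc (∑ u, q' (u, x, y))
        = ∑ u, margUS q s u (s x) * p (x, y) / margS p s (s x) :=
          Finset.sum_congr rfl fun u _ => hq'eval u x y
      _ = (∑ u, margUS q s u (s x)) * p (x, y) / margS p s (s x) := by
          rw [← Finset.sum_div, ← Finset.sum_mul]
      _ = p (x, y) := by
          rw [hcolS (s x), mul_comm, mul_div_assoc, div_self (hSpos x).ne', mul_one]
  have hq'sum : ∑ z, q' z = 1 := by
    rw [Fintype.sum_prod_type, Finset.sum_comm]
    calc (∑ w : 𝒳 × 𝒴, ∑ u, q' (u, w)) = ∑ w : 𝒳 × 𝒴, p w :=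
          Finset.sum_congr rfl fun w _ => hmargq' w.1 w.2
      _ = 1 := hp.2
  have hm' : ∀ u x, margUX q' u x = margUS q s u (s x) * margX p x / margS p s (s x) := by
    intro u x
    have h1 : ∀ y, q' (u, x, y) = margUS q s u (s x) / margS p s (s x) * p (x, y) := by
      intro y; rw [hq'eval]; ring
    calc margUX q' u x = ∑ y, margUS q s u (s x) / margS p s (s x) * p (x, y) :=
          Finset.sum_congr rfl fun y _ => h1 y
      _ = margUS q s u (s x) / margS p s (s x) * margX p x := by
          rw [← Finset.mul_sum]; rfl
      _ = margUS q s u (s x) * margX p x / margS p s (s x) := by ring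
  have hUS' : ∀ u s0, margUS q' s u s0 = margUS q s u s0 := by
    intro u s0
    rcases (Finset.univ.filter (fun x => s x = s0)).eq_empty_or_nonempty with h | h
    · show (∑ x ∈ Finset.univ.filter (fun x => s x = s0), margUX q' u x)
        = ∑ x ∈ Finset.univ.filter (fun x => s x = s0), margUX q u x
      rw [h, Finset.sum_empty, Finset.sum_empty]
    · have hB : 0 < margS p s s0 := by
        obtain ⟨x0, hx0⟩ := h
        rw [← (Finset.mem_filter.mp hx0).2]; exact hSpos x0
      calc margUS q' s u s0
          = ∑ x ∈ Finset.univ.filter (fun x => s x = s0),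
              margUS q s u s0 / margS p s s0 * margX p x := by
            refine Finset.sum_congr rfl fun x hx => ?_
            rw [hm' u x, (Finset.mem_filter.mp hx).2]; ring
        _ = margUS q s u s0 / margS p s s0 *
              ∑ x ∈ Finset.univ.filter (fun x => s x = s0), margX p x := by
            rw [← Finset.mul_sum]
        _ = margUS q s u s0 / margS p s s0 * margS p s s0 := by rfl
        _ = margUS q s u s0 := div_mul_cancel₀ _ hB.ne'
  have hMarkov : ∀ u x y, q' (u, x, y) * margS p s (s x) = margUS q' s u (s x) * p (x, y) := by
    intro u x y
    rw [hUS' u (s x), hq'eval u x y, div_mul_cancel₀ _ (hSpos x).ne']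
  have hUY' : ∀ u y, margUY q' u y = margUY q u y := by
    intro u y
    have hfib : ∀ s0, (∑ x ∈ Finset.univ.filter (fun x => s x = s0), q' (u, x, y))
        = ∑ x ∈ Finset.univ.filter (fun x => s x = s0), q (u, x, y) := by
      intro s0
      rcases (Finset.univ.filter (fun x => s x = s0)).eq_empty_or_nonempty with h | h
      · rw [h, Finset.sum_empty, Finset.sum_empty]
      · obtain ⟨x0, hx0⟩ := h
        have hsx0 : s x0 = s0 := (Finset.mem_filter.mp hx0).2
        have hB : 0 < margS p s s0 := by rw [← hsx0]; exact hSpos x0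
        have h1 : ∀ x ∈ Finset.univ.filter (fun x => s x = s0),
            q' (u, x, y) = margUS q s u s0 * (p (x0, y) / margX p x0) / margS p s s0
              * margX p x := by
          intro x hx
          have hsx : s x = s0 := (Finset.mem_filter.mp hx).2
          have hpx : p (x, y) = p (x0, y) / margX p x0 * margX p x := by
            rw [← hratio x x0 y (hsx.trans hsx0.symm), div_mul_cancel₀ _ (hX x).ne']
          rw [hq'eval, hsx, hpx]; ring
        have h2 : ∀ x ∈ Finset.univ.filter (fun x => s x = s0),
            q (u, x, y) = margUX q u x * (p (x0, y) / margX p x0) := by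
          intro x hx
          have hsx : s x = s0 := (Finset.mem_filter.mp hx).2
          rw [hqeval u x y, hratio x x0 y (hsx.trans hsx0.symm)]
        calc (∑ x ∈ Finset.univ.filter (fun x => s x = s0), q' (u, x, y))
            = ∑ x ∈ Finset.univ.filter (fun x => s x = s0),
                margUS q s u s0 * (p (x0, y) / margX p x0) / margS p s s0 * margX p x :=
              Finset.sum_congr rfl h1
          _ = margUS q s u s0 * (p (x0, y) / margX p x0) / margS p s s0 * margS p s s0 := by
              rw [← Finset.mul_sum]; rfl
          _ = margUS q s u s0 * (p (x0, y) / margX p x0) := div_mul_cancel₀ _ hB.ne'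
          _ = ∑ x ∈ Finset.univ.filter (fun x => s x = s0),
                margUX q u x * (p (x0, y) / margX p x0) := by
              rw [← Finset.sum_mul]; rfl
          _ = ∑ x ∈ Finset.univ.filter (fun x => s x = s0), q (u, x, y) :=
              (Finset.sum_congr rfl h2).symm
    calc margUY q' u y
        = ∑ s0, ∑ x ∈ Finset.univ.filter (fun x => s x = s0), q' (u, x, y) :=
          (Finset.sum_fiberwise Finset.univ s (fun x => q' (u, x, y))).symm
      _ = ∑ s0, ∑ x ∈ Finset.univ.filter (fun x => s x = s0), q (u, x, y) :=
          Finset.sum_congr rfl fun s0 _ => hfib s0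
      _ = margUY q u y := Finset.sum_fiberwise Finset.univ s (fun x => q (u, x, y))
  have hrow' : ∀ u, ∑ x, margUX q' u x = ∑ x, margUX q u x := by
    intro u
    calc (∑ x, margUX q' u x) = ∑ s0, margUS q' s u s0 :=
          (Finset.sum_fiberwise Finset.univ s (fun x => margUX q' u x)).symm
      _ = ∑ s0, margUS q s u s0 := Finset.sum_congr rfl fun s0 _ => hUS' u s0
      _ = ∑ x, margUX q u x := Finset.sum_fiberwise Finset.univ s (fun x => margUX q u x)
  have hcol' : ∀ x, ∑ u, margUX q' u x = margX p x := by
    intro x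
    calc (∑ u, margUX q' u x)
        = ∑ u, margUS q s u (s x) * margX p x / margS p s (s x) :=
          Finset.sum_congr rfl fun u _ => hm' u x
      _ = (∑ u, margUS q s u (s x)) * margX p x / margS p s (s x) := by
          rw [← Finset.sum_div, ← Finset.sum_mul]
      _ = margX p x := by
          rw [hcolS (s x), mul_comm, mul_div_assoc, div_self (hSpos x).ne', mul_one]
  have hfiberL : ∀ u s0, (∑ x ∈ Finset.univ.filter (fun x => s x = s0),
        if 0 < margUX q' u x then margUX q' u x *
          Real.log (margUX q' u x / ((∑ b, margUX q' u b) * (∑ a, margUX q' a x))) else 0)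
      = (if 0 < margUS q s u s0 then margUS q s u s0 *
          Real.log (margUS q s u s0 / ((∑ x, margUX q u x) * margS p s s0)) else 0) := by
    intro u s0
    rcases (Finset.univ.filter (fun x => s x = s0)).eq_empty_or_nonempty with h | h
    · have hA0 : margUS q s u s0 = 0 := by
        have he : margUS q s u s0
            = ∑ x ∈ Finset.univ.filter (fun x => s x = s0), margUX q u x := rfl
        rw [he, h, Finset.sum_empty]
      rw [h, Finset.sum_empty, hA0]
      simp
    · have hB : 0 < margS p s s0 := by
        obtain ⟨x0, hx0⟩ := h
        rw [← (Finset.mem_filter.mp hx0).2]; exact hSpos x0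
      have hterm : ∀ x ∈ Finset.univ.filter (fun x => s x = s0),
          (if 0 < margUX q' u x then margUX q' u x *
            Real.log (margUX q' u x / ((∑ b, margUX q' u b) * (∑ a, margUX q' a x))) else 0)
          = margX p x / margS p s s0 * (if 0 < margUS q s u s0 then margUS q s u s0 *
              Real.log (margUS q s u s0 / ((∑ x', margUX q u x') * margS p s s0)) else 0) := by
        intro x hx
        have hsx : s x = s0 := (Finset.mem_filter.mp hx).2
        rw [hrow' u, hcol' x, hm' u x, hsx]
        by_cases hA : 0 < margUS q s u s0
        · have hQ : 0 < ∑ x', margUX q u x' := lt_of_lt_of_le hA (hqUle u s0)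
          rw [if_pos (div_pos (mul_pos hA (hX x)) hB), if_pos hA]
          have harg : margUS q s u s0 * margX p x / margS p s s0
                / ((∑ x', margUX q u x') * margX p x)
              = margUS q s u s0 / ((∑ x', margUX q u x') * margS p s s0) := by
            rw [div_div, div_eq_div_iff (mul_pos hB (mul_pos hQ (hX x))).ne'
              (mul_pos hQ hB).ne']
            ring
          rw [harg]; ring
        · rw [if_neg hA, le_antisymm (not_lt.mp hA) (hUSnn u s0)]
          simp
      refine (Finset.sum_congr rfl hterm).trans ?_
      rw [← Finset.sum_mul, ← Finset.sum_div]
      have hsum : (∑ x ∈ Finset.univ.filter (fun x => s x = s0), margX p x)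
          = margS p s s0 := rfl
      rw [hsum, div_self hB.ne', one_mul]
  have hfiberR : ∀ u s0, (∑ x ∈ Finset.univ.filter (fun x => s x = s0),
        ((if 0 < margUX q u x then margUX q u x *
            Real.log (margUX q u x / ((∑ b, margUX q u b) * (∑ a, margUX q a x))) else 0)
         - (if 0 < margUX q u x then margUX q u x *
            Real.log (margUX q u x * margS p s (s x) / (margUS q s u (s x) * margX p x))
            else 0)))
      = (if 0 < margUS q s u s0 then margUS q s u s0 *
          Real.log (margUS q s u s0 / ((∑ x, margUX q u x) * margS p s s0)) else 0) := by
    intro u s0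
    have hterm : ∀ x ∈ Finset.univ.filter (fun x => s x = s0),
        ((if 0 < margUX q u x then margUX q u x *
            Real.log (margUX q u x / ((∑ b, margUX q u b) * (∑ a, margUX q a x))) else 0)
         - (if 0 < margUX q u x then margUX q u x *
            Real.log (margUX q u x * margS p s (s x) / (margUS q s u (s x) * margX p x))
            else 0))
        = margUX q u x *
            Real.log (margUS q s u s0 / ((∑ x', margUX q u x') * margS p s s0)) := by
      intro x hx
      have hsx : s x = s0 := (Finset.mem_filter.mp hx).2
      rw [hcol x, hsx]
      by_cases hA : 0 < margUX q u x
      · have hUSpos : 0 < margUS q s u s0 := by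
          rw [← hsx]; exact lt_of_lt_of_le hA (hUXle u x)
        have hQ : 0 < ∑ x', margUX q u x' := lt_of_lt_of_le hUSpos (hqUle u s0)
        have hB : 0 < margS p s s0 := by rw [← hsx]; exact hSpos x
        rw [if_pos hA, if_pos hA, ← mul_sub, log_diff_aux hA hB (hX x) hQ hUSpos]
      · have hA0 : margUX q u x = 0 := le_antisymm (not_lt.mp hA) (hUXnn u x)
        rw [if_neg hA, if_neg hA, hA0]
        simp
    refine (Finset.sum_congr rfl hterm).trans ?_
    rw [← Finset.sum_mul]
    have hsum : (∑ x ∈ Finset.univ.filter (fun x => s x = s0), margUX q u x)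
        = margUS q s u s0 := rfl
    rw [hsum]
    by_cases hA : 0 < margUS q s u s0
    · rw [if_pos hA]
    · rw [if_neg hA, le_antisymm (not_lt.mp hA) (hUSnn u s0), zero_mul]
  have hL : mutInfo (fun z : 𝒰 × 𝒳 => margUX q' z.1 z.2)
      = ∑ u, ∑ s0, (if 0 < margUS q s u s0 then margUS q s u s0 *
          Real.log (margUS q s u s0 / ((∑ x, margUX q u x) * margS p s s0)) else 0) := by
    have e0 : mutInfo (fun z : 𝒰 × 𝒳 => margUX q' z.1 z.2)
        = ∑ z : 𝒰 × 𝒳, (if 0 < margUX q' z.1 z.2 then margUX q' z.1 z.2 *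
            Real.log (margUX q' z.1 z.2 /
              ((∑ b, margUX q' z.1 b) * (∑ a, margUX q' a z.2))) else 0) := rfl
    rw [e0, Fintype.sum_prod_type]
    refine Finset.sum_congr rfl fun u _ => ?_
    exact ((Finset.sum_fiberwise Finset.univ s _).symm).trans
      (Finset.sum_congr rfl fun s0 _ => hfiberL u s0)
  have hR : mutInfo (fun z : 𝒰 × 𝒳 => margUX q z.1 z.2)
        - (∑ z : 𝒰 × 𝒳, (if 0 < margUX q z.1 z.2 then
            margUX q z.1 z.2 * Real.log (margUX q z.1 z.2 * margS p s (s z.2)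
              / (margUS q s z.1 (s z.2) * margX p z.2)) else 0))
      = ∑ u, ∑ s0, (if 0 < margUS q s u s0 then margUS q s u s0 *
          Real.log (margUS q s u s0 / ((∑ x, margUX q u x) * margS p s s0)) else 0) := by
    have e0 : mutInfo (fun z : 𝒰 × 𝒳 => margUX q z.1 z.2)
        = ∑ z : 𝒰 × 𝒳, (if 0 < margUX q z.1 z.2 then margUX q z.1 z.2 *
            Real.log (margUX q z.1 z.2 /
              ((∑ b, margUX q z.1 b) * (∑ a, margUX q a z.2))) else 0) := rfl
    rw [e0, ← Finset.sum_sub_distrib, Fintype.sum_prod_type]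
    refine Finset.sum_congr rfl fun u _ => ?_
    exact ((Finset.sum_fiberwise Finset.univ s _).symm).trans
      (Finset.sum_congr rfl fun s0 _ => hfiberR u s0)
  have hv : mutInfo (fun z : 𝒰 × 𝒴 => margUY q' z.1 z.2)
      = mutInfo (fun z : 𝒰 × 𝒴 => margUY q z.1 z.2) := by
    have he : (fun z : 𝒰 × 𝒴 => margUY q' z.1 z.2) = (fun z : 𝒰 × 𝒴 => margUY q z.1 z.2) :=
      funext fun z => hUY' z.1 z.2
    rw [he]
  refine ⟨q', ⟨hq'nn, hq'sum⟩, hmargq', hMarkov, hUS', hUY', ?_, hv⟩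
  rw [hL]
  exact hR.symm


end IBConstruction

end
end
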